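/- arXiv:1511.08751 — 8 statements merged into one kernel-verified Lean document; each statement's English description precedes it below -/
import Mathlib

section
/- Let V be a real inner product space of finite dimension m and let R be an algebraic curvature tensor on V. Suppose there exists r with 2 ≤ r ≤ m − 2 such that every r-dimensional subspace of V is special for R. Then ⟨R(v, w) v, η⟩ = 0 for all orthonormal vectors v, w, η ∈ V (i.e. R has pointwise constant sectional curvature). -/
open RealInnerProductSpace Module

/-- An algebraic curvature tensor on a real inner product space `V`. -/
structure CurvatureTensor (V : Type*) [NormedAddCommGroup V] [InnerProductSpace ℝ V] where
  R : V → V → V → V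
  lin₁ : ∀ Y Z, IsLinearMap ℝ fun X => R X Y Z
  lin₂ : ∀ X Z, IsLinearMap ℝ fun Y => R X Y Z
  lin₃ : ∀ X Y, IsLinearMap ℝ fun Z => R X Y Z
  antisymm₁ : ∀ X Y Z W, ⟪R X Y Z, W⟫ = -⟪R Y X Z, W⟫
  antisymm₂ : ∀ X Y Z W, ⟪R X Y Z, W⟫ = -⟪R X Y W, Z⟫
  pair_symm : ∀ X Y Z W, ⟪R X Y Z, W⟫ = ⟪R Z W X, Y⟫
  bianchi : ∀ X Y Z, R X Y Z + R Y Z X + R Z X Y = 0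

/-- A subspace `W` is special for `T` if for every orthonormal basis `v_1, …, v_r` of `W`
and every `w ∈ W`, one has `∑ i, R (v i) w (v i) ∈ W`. -/
def CurvatureTensor.IsSpecial {V : Type*} [NormedAddCommGroup V] [InnerProductSpace ℝ V]
    (T : CurvatureTensor V) (W : Submodule ℝ V) : Prop :=
  ∀ (b : OrthonormalBasis (Fin (finrank ℝ W)) ℝ W) (w : V), w ∈ W →
    (∑ i, T.R (b i : V) w (b i)) ∈ W

/-- If every `r`-dimensional subspace is special, then for any orthonormal family `d` of
size `r` and any `η` orthogonal to all of them, the trace-type sum vanishes. -/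
private lemma special_sum_zero {V : Type*} [NormedAddCommGroup V] [InnerProductSpace ℝ V]
    [FiniteDimensional ℝ V]
    (T : CurvatureTensor V) {r : ℕ}
    (hspec : ∀ W : Submodule ℝ V, finrank ℝ W = r → T.IsSpecial W)
    {ι : Type*} [Fintype ι] {d : ι → V} (hd : Orthonormal ℝ d)
    (hcard : Fintype.card ι = r) (j : ι) {η : V}
    (hη : ∀ i, ⟪d i, η⟫ = 0) :
    ∑ i, ⟪T.R (d i) (d j) (d i), η⟫ = 0 := by
  classical
  have hli := hd.linearIndependent
  set W : Submodule ℝ V := Submodule.span ℝ (Set.range d) with hWdef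
  have hfr : finrank ℝ W = r := by
    rw [hWdef, finrank_span_eq_card hli, hcard]
  let b : Basis ι ℝ W := Basis.span hli
  have hb : ∀ i, (b i : V) = d i := fun i => congrArg Subtype.val (Basis.span_apply hli i)
  have hbon : Orthonormal ℝ b := by
    rw [orthonormal_iff_ite] at hd ⊢
    intro i i'
    rw [Submodule.coe_inner, hb, hb]
    exact hd i i'
  let onb : OrthonormalBasis ι ℝ W := b.toOrthonormalBasis hbon
  have honb : ∀ i, (onb i : V) = d i := by
    intro i
    have : onb i = b i := by
      simp only [onb, Basis.coe_toOrthonormalBasis]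
    rw [this, hb]
  let e : ι ≃ Fin (finrank ℝ W) := Fintype.equivFinOfCardEq (hcard.trans hfr.symm)
  let onb' : OrthonormalBasis (Fin (finrank ℝ W)) ℝ W := onb.reindex e
  have hmem : (∑ i, T.R (onb' i : V) (d j) (onb' i)) ∈ W :=
    hspec W hfr onb' (d j) (Submodule.subset_span ⟨j, rfl⟩)
  have hsum : (∑ i, T.R ((onb' i : V)) (d j) (onb' i)) = ∑ i, T.R (d i) (d j) (d i) := by
    rw [← Equiv.sum_comp e (fun i => T.R ((onb' i : V)) (d j) (onb' i))]
    refine Finset.sum_congr rfl fun i _ => ?_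
    have : (onb' (e i) : V) = d i := by
      rw [OrthonormalBasis.reindex_apply, Equiv.symm_apply_apply, honb]
    rw [this]
  rw [hsum] at hmem
  have hperp : ∀ x ∈ W, ⟪x, η⟫ = 0 := by
    intro x hx
    induction hx using Submodule.span_induction with
    | mem x hx => obtain ⟨i, rfl⟩ := hx; exact hη i
    | zero => simp
    | add x y _ _ hx hy => rw [inner_add_left, hx, hy]; ring
    | smul a x _ hx => rw [real_inner_smul_left, hx]; ring
  rw [← sum_inner]
  exact hperp _ hmem

/-- Frame version: for an orthonormal family `c` orthogonal to the orthonormal pair `w, η`,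
the sum of `⟪R(cᵢ, w)cᵢ, η⟫` over any subfamily of size `r - 1` vanishes. -/
private lemma frame_sum_zero {V : Type*} [NormedAddCommGroup V] [InnerProductSpace ℝ V]
    [FiniteDimensional ℝ V]
    (T : CurvatureTensor V) {r : ℕ}
    (hspec : ∀ W : Submodule ℝ V, finrank ℝ W = r → T.IsSpecial W)
    {ι : Type*} [Fintype ι] [DecidableEq ι] {c : ι → V} {w η : V}
    (hc : Orthonormal ℝ c) (hw : ‖w‖ = 1) (hcw : ∀ i, ⟪c i, w⟫ = 0)
    (hcη : ∀ i, ⟪c i, η⟫ = 0) (hwη : ⟪w, η⟫ = 0)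
    (s : Finset ι) (hs : s.card + 1 = r) :
    ∑ i ∈ s, ⟪T.R (c i) w (c i), η⟫ = 0 := by
  classical
  set d : Option {x // x ∈ s} → V := fun o => o.elim w (fun i => c i) with hd
  have hdon : Orthonormal ℝ d := by
    rw [orthonormal_iff_ite]
    rw [orthonormal_iff_ite] at hc
    rintro (_ | ⟨i, hi⟩) (_ | ⟨i', hi'⟩)
    · simp [d, hw]
    · simpa [d, real_inner_comm] using hcw i'
    · simpa [d] using hcw i
    · have := hc i i'
      by_cases hii : i = i'
      · subst hii
        simpa [d] using this
      · have hne : (⟨i, hi⟩ : {x // x ∈ s}) ≠ ⟨i', hi'⟩ := by simpa using hii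
        simp only [d, Option.elim]
        rw [if_neg hii] at this
        rw [this]
        simp [hne]
  have hcard : Fintype.card (Option {x // x ∈ s}) = r := by
    rw [Fintype.card_option, Fintype.card_coe, hs]
  have hη' : ∀ o, ⟪d o, η⟫ = 0 := by
    rintro (_ | ⟨i, hi⟩)
    · simpa [d] using hwη
    · simpa [d] using hcη i
  have key := special_sum_zero T hspec hdon hcard none hη'
  rw [Fintype.sum_option] at key
  have h0 : ⟪T.R (d none) (d none) (d none), η⟫ = 0 := by
    have := T.antisymm₁ (d none) (d none) (d none) η
    linarith
  rw [h0, zero_add] at key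
  have : ∑ a : {x // x ∈ s}, ⟪T.R (d (some a)) (d none) (d (some a)), η⟫
      = ∑ i ∈ s, ⟪T.R (c i) w (c i), η⟫ := by
    rw [← Finset.sum_coe_sort s (fun i => ⟪T.R (c i) w (c i), η⟫)]
    rfl
  rw [← this]
  exact key

theorem constant_sectional_of_special_r_subspaces {V : Type*} [NormedAddCommGroup V] [InnerProductSpace ℝ V] [FiniteDimensional ℝ V]
    (T : CurvatureTensor V) (r : ℕ) (hr2 : 2 ≤ r) (hrm : r ≤ finrank ℝ V - 2)
    (hspec : ∀ W : Submodule ℝ V, finrank ℝ W = r → T.IsSpecial W)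
    (v w η : V) (h : Orthonormal ℝ ![v, w, η]) :
    ⟪T.R v w v, η⟫ = 0 := by
  classical
  obtain ⟨k, rfl⟩ : ∃ k, r = k + 2 := ⟨r - 2, by omega⟩
  -- basic orthonormality facts
  have hv : ‖v‖ = 1 := by simpa using h.1 0
  have hw : ‖w‖ = 1 := by simpa using h.1 1
  have hvw : ⟪v, w⟫ = 0 := by
    have := h.2 (show (0 : Fin 3) ≠ 1 by decide); simpa using this
  have hvη : ⟪v, η⟫ = 0 := by
    have := h.2 (show (0 : Fin 3) ≠ 2 by decide); simpa using this
  have hwη : ⟪w, η⟫ = 0 := by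
    have := h.2 (show (1 : Fin 3) ≠ 2 by decide); simpa using this
  -- dimension bookkeeping
  have hm : k + 4 ≤ finrank ℝ V := by omega
  set K : Submodule ℝ V := Submodule.span ℝ (Set.range ![v, w, η]) with hKdef
  have hK : finrank ℝ K = 3 := by
    rw [hKdef, finrank_span_eq_card h.linearIndependent]
    simp
  have hKperp : k + 1 ≤ finrank ℝ Kᗮ := by
    have := K.finrank_add_finrank_orthogonal
    omega
  -- an orthonormal family of size k+1 orthogonal to v, w, η
  let std := stdOrthonormalBasis ℝ Kᗮ
  let g : Fin (k + 1) → V := fun i => ((std (Fin.castLE hKperp i) : Kᗮ) : V)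
  have hgmem : ∀ i, g i ∈ Kᗮ := fun i => ((std (Fin.castLE hKperp i) : Kᗮ)).2
  have hgon : Orthonormal ℝ g := by
    rw [orthonormal_iff_ite]
    intro i i'
    have := orthonormal_iff_ite.mp std.orthonormal (Fin.castLE hKperp i) (Fin.castLE hKperp i')
    rw [Submodule.coe_inner] at this
    rw [show (g i : V) = _ from rfl]
    rw [this]
    congr 1
    simp only [eq_iff_iff]
    constructor
    · intro hh; exact Fin.castLE_injective hKperp hh
    · intro hh; rw [hh]
  have hKmem : ∀ x ∈ ({v, w, η} : Set V), x ∈ K := by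
    intro x hx
    apply Submodule.subset_span
    rcases hx with rfl | rfl | rfl
    · exact ⟨0, rfl⟩
    · exact ⟨1, rfl⟩
    · exact ⟨2, rfl⟩
  have hgperp : ∀ i, ∀ x ∈ ({v, w, η} : Set V), ⟪g i, x⟫ = 0 := by
    intro i x hx
    rw [real_inner_comm]
    exact (Submodule.mem_orthogonal K (g i)).mp (hgmem i) x (hKmem x hx)
  -- the full family c of size k+2
  set c : Option (Fin (k + 1)) → V := fun o => o.elim v g with hc
  have hcon : Orthonormal ℝ c := by
    rw [orthonormal_iff_ite]
    rintro (_ | i) (_ | i')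
    · simp [c, hv]
    · simpa [c, real_inner_comm] using hgperp i' v (by simp)
    · simpa [c] using hgperp i v (by simp)
    · have := orthonormal_iff_ite.mp hgon i i'
      by_cases hii : i = i'
      · subst hii; simpa [c] using this
      · rw [if_neg hii] at this
        simp only [c, Option.elim]
        rw [this]
        simp [hii]
  have hcw : ∀ o, ⟪c o, w⟫ = 0 := by
    rintro (_ | i)
    · simpa [c] using hvw
    · simpa [c] using hgperp i w (by simp)
  have hcη : ∀ o, ⟪c o, η⟫ = 0 := by
    rintro (_ | i)
    · simpa [c] using hvη
    · simpa [c] using hgperp i η (by simp)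
  -- frame sums
  have hframe : ∀ o : Option (Fin (k + 1)),
      ∑ i ∈ Finset.univ.erase o, ⟪T.R (c i) w (c i), η⟫ = 0 := by
    intro o
    refine frame_sum_zero T hspec hcon hw hcw hcη hwη _ ?_
    rw [Finset.card_erase_of_mem (Finset.mem_univ o), Finset.card_univ, Fintype.card_option,
      Fintype.card_fin]
    omega
  set Stot : ℝ := ∑ o : Option (Fin (k + 1)), ⟪T.R (c o) w (c o), η⟫ with hStot
  have hval : ∀ o : Option (Fin (k + 1)), ⟪T.R (c o) w (c o), η⟫ = Stot := by
    intro o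
    have := hframe o
    rw [Finset.sum_erase_eq_sub (Finset.mem_univ o)] at this
    rw [hStot]
    linarith
  have hStot0 : Stot = 0 := by
    have h1 : Stot = (k + 2 : ℝ) * Stot := by
      rw [hStot]
      calc ∑ o : Option (Fin (k + 1)), ⟪T.R (c o) w (c o), η⟫
          = ∑ _o : Option (Fin (k + 1)), Stot := Finset.sum_congr rfl fun o _ => hval o
        _ = (k + 2 : ℝ) * Stot := by
            rw [Finset.sum_const, Finset.card_univ, Fintype.card_option, Fintype.card_fin]
            ring
    nlinarith [h1]
  have := hval none
  rw [hStot0] at this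
  simpa [c] using this
end

section
/- Let V be a real inner product space of finite dimension m ≥ 3 and let R be an algebraic curvature tensor on V. Suppose every (m − 1)-dimensional subspace of V is special for R. Then R is Einstein at the point: there exists λ ∈ ℝ such that for every orthonormal basis v_1, …, v_m of V and all w, η ∈ V one has ∑_{i=1}^{m} ⟨R(v_i, w) v_i, η⟩ = λ ⟨w, η⟩. -/
open RealInnerProductSpace Module

section Aux

variable {V : Type*} [NormedAddCommGroup V] [InnerProductSpace ℝ V] [FiniteDimensional ℝ V]

set_option linter.unusedSectionVars false

/-- Trace of a bilinear form over an orthonormal basis is basis independent. -/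
lemma sum_bilin_diag {ι κ : Type*} [Fintype ι] [Fintype κ]
    (B : V →ₗ[ℝ] V →ₗ[ℝ] ℝ) (b : OrthonormalBasis ι ℝ V) (c : OrthonormalBasis κ ℝ V) :
    ∑ i, B (b i) (b i) = ∑ j, B (c j) (c j) := by
  classical
  have h1 : ∀ i, B (b i) (b i) = ∑ j, ∑ k, ⟪c j, b i⟫ * (⟪c k, b i⟫ * B (c j) (c k)) := by
    intro i
    conv_lhs => rw [← c.sum_repr' (b i)]
    simp only [map_sum, LinearMap.sum_apply, map_smul, LinearMap.smul_apply, smul_eq_mul,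
      Finset.mul_sum]
    rw [Finset.sum_comm]
    exact Finset.sum_congr rfl fun _ _ => Finset.sum_congr rfl fun _ _ => by ring
  simp_rw [h1]
  rw [Finset.sum_comm]
  refine Finset.sum_congr rfl fun j _ => ?_
  rw [Finset.sum_comm]
  have h2 : ∀ k, ∑ i, ⟪c j, b i⟫ * (⟪c k, b i⟫ * B (c j) (c k))
      = ⟪c j, c k⟫ * B (c j) (c k) := by
    intro k
    rw [← b.sum_inner_mul_inner (c j) (c k), Finset.sum_mul]
    refine Finset.sum_congr rfl fun i _ => ?_
    rw [real_inner_comm (b i) (c k)]; ring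
  simp_rw [h2]
  have h3 : ∀ k, ⟪c j, c k⟫ = if j = k then (1:ℝ) else 0 :=
    fun k => orthonormal_iff_ite.mp c.orthonormal j k
  simp [h3]

variable (T : CurvatureTensor V)

/-- The Ricci-type bilinear form, computed with the standard orthonormal basis. -/
noncomputable def CurvatureTensor.ricB : V →ₗ[ℝ] V →ₗ[ℝ] ℝ :=
  LinearMap.mk₂ ℝ
    (fun w η => ∑ i, ⟪T.R (stdOrthonormalBasis ℝ V i) w (stdOrthonormalBasis ℝ V i), η⟫)
    (fun w w' η => by
      simp [(T.lin₂ _ _).map_add, inner_add_left, Finset.sum_add_distrib])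
    (fun r w η => by
      simp [(T.lin₂ _ _).map_smul, real_inner_smul_left, Finset.mul_sum])
    (fun w η η' => by simp [inner_add_right, Finset.sum_add_distrib])
    (fun r w η => by simp [real_inner_smul_right, Finset.mul_sum])

lemma CurvatureTensor.ricB_eq_sum {ι : Type*} [Fintype ι] (b : OrthonormalBasis ι ℝ V)
    (w η : V) : T.ricB w η = ∑ i, ⟪T.R (b i) w (b i), η⟫ := by
  let B : V →ₗ[ℝ] V →ₗ[ℝ] ℝ :=
    LinearMap.mk₂ ℝ (fun x z : V => ⟪T.R x w z, η⟫)
      (fun a a' z => by simp [(T.lin₁ w z).map_add, inner_add_left])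
      (fun r a z => by simp [(T.lin₁ w z).map_smul, real_inner_smul_left])
      (fun a z z' => by simp [(T.lin₃ a w).map_add, inner_add_left])
      (fun r a z => by simp [(T.lin₃ a w).map_smul, real_inner_smul_left])
  have h1 : T.ricB w η = ∑ i, B (stdOrthonormalBasis ℝ V i) (stdOrthonormalBasis ℝ V i) := rfl
  have h2 : (∑ i, B (b i) (b i)) = ∑ i, ⟪T.R (b i) w (b i), η⟫ := rfl
  rw [h1, sum_bilin_diag B (stdOrthonormalBasis ℝ V) b, h2]

lemma CurvatureTensor.ricB_symm (w η : V) : T.ricB w η = T.ricB η w := by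
  show (∑ i, ⟪T.R (stdOrthonormalBasis ℝ V i) w (stdOrthonormalBasis ℝ V i), η⟫)
      = ∑ i, ⟪T.R (stdOrthonormalBasis ℝ V i) η (stdOrthonormalBasis ℝ V i), w⟫
  exact Finset.sum_congr rfl fun i _ => T.pair_symm _ _ _ _

/-- If every hyperplane is special, the Ricci form vanishes on orthogonal pairs
(with unit second argument). -/
lemma CurvatureTensor.ricB_zero_of_unit
    (hspec : ∀ W : Submodule ℝ V, finrank ℝ W = finrank ℝ V - 1 → T.IsSpecial W)
    {w η : V} (hη : ‖η‖ = 1) (ho : ⟪w, η⟫ = 0) : T.ricB w η = 0 := by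
  classical
  have hη0 : η ≠ 0 := by intro h; rw [h, norm_zero] at hη; norm_num at hη
  set W : Submodule ℝ V := (ℝ ∙ η)ᗮ with hWdef
  have hrank : finrank ℝ W = finrank ℝ V - 1 := by
    have h := Submodule.finrank_add_finrank_orthogonal (K := (ℝ ∙ η)) (𝕜 := ℝ) (E := V)
    rw [finrank_span_singleton hη0, ← hWdef] at h
    omega
  set b' := stdOrthonormalBasis ℝ W with hb'
  have hwW : w ∈ W :=
    Submodule.mem_orthogonal_singleton_iff_inner_right.mpr
      (by rw [real_inner_comm]; exact ho)
  have hS : (∑ i, T.R (b' i : V) w (b' i)) ∈ W := hspec W hrank b' w hwW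
  have hSη : ⟪(∑ i, T.R (b' i : V) w (b' i) : V), η⟫ = 0 := by
    rw [real_inner_comm]
    exact Submodule.mem_orthogonal_singleton_iff_inner_right.mp hS
  -- build an orthonormal basis of `V` out of `b'` and `η`
  set v : Fin (finrank ℝ W) ⊕ Unit → V := Sum.elim (fun i => (b' i : V)) (fun _ => η) with hv
  have hbW : ∀ i, (b' i : V) ∈ W := fun i => (b' i).2
  have hinner_bη : ∀ i, ⟪(b' i : V), η⟫ = 0 := by
    intro i
    rw [real_inner_comm]
    exact Submodule.mem_orthogonal_singleton_iff_inner_right.mp (hbW i)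
  have hon : Orthonormal ℝ v := by
    rw [orthonormal_iff_ite]
    rintro (i | i) (j | j)
    · have := orthonormal_iff_ite.mp b'.orthonormal i j
      rw [Submodule.coe_inner] at this
      simpa [hv] using this
    · simpa [hv] using hinner_bη i
    · simpa [hv, real_inner_comm η] using hinner_bη j
    · simp [hv, real_inner_self_eq_norm_mul_norm, hη]
  have hsp : ⊤ ≤ Submodule.span ℝ (Set.range v) := by
    rw [hv, Set.Sum.elim_range, Submodule.span_union]
    have h1 : Set.range (fun i => (b' i : V)) = W.subtype '' Set.range b' := by
      rw [← Set.range_comp]; rfl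
    have h2 : Submodule.span ℝ (Set.range (fun i => (b' i : V))) = W := by
      rw [h1, Submodule.span_image, ← b'.coe_toBasis, b'.toBasis.span_eq]
      exact Submodule.map_subtype_top W
    have h3 : Submodule.span ℝ (Set.range (fun _ : Unit => η)) = ℝ ∙ η := by
      rw [Set.range_const]
    rw [h2, h3, sup_comm]
    rw [Submodule.sup_orthogonal_of_hasOrthogonalProjection (K := ℝ ∙ η)]
  let bb : OrthonormalBasis (Fin (finrank ℝ W) ⊕ Unit) ℝ V := OrthonormalBasis.mk hon hsp
  have hbb : ∀ x, bb x = v x := fun x => by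
    simp [bb, OrthonormalBasis.coe_mk]
  rw [T.ricB_eq_sum bb]
  rw [Fintype.sum_sum_type]
  have hfirst : ∑ i, ⟪T.R (bb (Sum.inl i)) w (bb (Sum.inl i)), η⟫ = 0 := by
    simp_rw [hbb]
    simp only [hv, Sum.elim_inl]
    rw [← sum_inner]
    exact hSη
  have hsecond : ∑ x : Unit, ⟪T.R (bb (Sum.inr x)) w (bb (Sum.inr x)), η⟫ = 0 := by
    simp_rw [hbb]
    simp only [hv, Sum.elim_inr]
    have := T.antisymm₂ η w η η
    have h0 : ⟪T.R η w η, η⟫ = 0 := by linarith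
    simp [h0]
  rw [hfirst, hsecond, add_zero]

lemma CurvatureTensor.ricB_zero
    (hspec : ∀ W : Submodule ℝ V, finrank ℝ W = finrank ℝ V - 1 → T.IsSpecial W)
    {w η : V} (ho : ⟪w, η⟫ = 0) : T.ricB w η = 0 := by
  by_cases hη : η = 0
  · simp [hη]
  · have hn : ‖η‖ ≠ 0 := norm_ne_zero_iff.mpr hη
    have hu : ‖(‖η‖⁻¹ • η)‖ = 1 := by
      rw [norm_smul, norm_inv, norm_norm]
      exact inv_mul_cancel₀ hn
    have hou : ⟪w, ‖η‖⁻¹ • η⟫ = 0 := by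
      rw [real_inner_smul_right, ho, mul_zero]
    have h0 := T.ricB_zero_of_unit hspec hu hou
    have : η = ‖η‖ • (‖η‖⁻¹ • η) := by
      rw [smul_smul, mul_inv_cancel₀ hn, one_smul]
    calc T.ricB w η = T.ricB w (‖η‖ • (‖η‖⁻¹ • η)) := by rw [← this]
    _ = ‖η‖ • T.ricB w (‖η‖⁻¹ • η) := by rw [map_smul]
    _ = 0 := by rw [h0, smul_zero]

end Aux

theorem einstein_of_special_hyperplanes {V : Type*} [NormedAddCommGroup V] [InnerProductSpace ℝ V] [FiniteDimensional ℝ V]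
    (T : CurvatureTensor V) (hm : 3 ≤ finrank ℝ V)
    (hspec : ∀ W : Submodule ℝ V, finrank ℝ W = finrank ℝ V - 1 → T.IsSpecial W) :
    ∃ lam : ℝ, ∀ (b : OrthonormalBasis (Fin (finrank ℝ V)) ℝ V) (w η : V),
      ∑ i, ⟪T.R (b i) w (b i), η⟫ = lam * ⟪w, η⟫ := by
  classical
  set e : V := stdOrthonormalBasis ℝ V ⟨0, by omega⟩ with he
  have hel : ‖e‖ = 1 := (stdOrthonormalBasis ℝ V).orthonormal.1 _
  set lam : ℝ := T.ricB e e with hlam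
  -- two orthogonal unit vectors have the same diagonal Ricci value
  have hpair : ∀ a b : V, ‖a‖ = 1 → ‖b‖ = 1 → ⟪a, b⟫ = 0 →
      T.ricB a a = T.ricB b b := by
    intro a b ha hb hab
    have hor : ⟪a + b, a - b⟫ = 0 := by
      rw [inner_sub_right, inner_add_left, inner_add_left,
        real_inner_self_eq_norm_mul_norm, real_inner_self_eq_norm_mul_norm,
        real_inner_comm b a, ha, hb]
      ring
    have h0 := T.ricB_zero hspec hor
    have hsym := T.ricB_symm a b
    simp only [map_add, map_sub, LinearMap.add_apply, LinearMap.sub_apply] at h0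
    linarith
  -- any unit vector has diagonal value lam
  have hunit : ∀ u : V, ‖u‖ = 1 → T.ricB u u = lam := by
    intro u hu
    -- find a unit vector orthogonal to both u and e
    set U : Submodule ℝ V := (ℝ ∙ u) ⊔ (ℝ ∙ e) with hU
    have hu0 : u ≠ 0 := by intro h; rw [h, norm_zero] at hu; norm_num at hu
    have he0 : e ≠ 0 := by intro h; rw [h, norm_zero] at hel; norm_num at hel
    have hUle : finrank ℝ U ≤ 2 := by
      have h := Submodule.finrank_sup_add_finrank_inf_eq (ℝ ∙ u) (ℝ ∙ e)
      rw [finrank_span_singleton hu0, finrank_span_singleton he0, ← hU] at h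
      omega
    have hperp : 0 < finrank ℝ (Uᗮ : Submodule ℝ V) := by
      have h := Submodule.finrank_add_finrank_orthogonal (K := U) (𝕜 := ℝ) (E := V)
      omega
    have hne : (Uᗮ : Submodule ℝ V) ≠ ⊥ := by
      intro h
      rw [h, finrank_bot] at hperp
      omega
    obtain ⟨z, hzU, hz0⟩ := Submodule.exists_mem_ne_zero_of_ne_bot hne
    have hzu : ⟪z, u⟫ = 0 := by
      rw [real_inner_comm]
      exact hzU u (Submodule.mem_sup_left (Submodule.mem_span_singleton_self u))
    have hze : ⟪z, e⟫ = 0 := by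
      rw [real_inner_comm]
      exact hzU e (Submodule.mem_sup_right (Submodule.mem_span_singleton_self e))
    have hzn : ‖z‖ ≠ 0 := norm_ne_zero_iff.mpr hz0
    set z' : V := ‖z‖⁻¹ • z with hz'
    have hz'1 : ‖z'‖ = 1 := by
      rw [hz', norm_smul, norm_inv, norm_norm]
      exact inv_mul_cancel₀ hzn
    have hz'u : ⟪z', u⟫ = 0 := by rw [hz', real_inner_smul_left, hzu, mul_zero]
    have hz'e : ⟪z', e⟫ = 0 := by rw [hz', real_inner_smul_left, hze, mul_zero]
    have h1 : T.ricB u u = T.ricB z' z' :=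
      hpair u z' hu hz'1 (by rw [real_inner_comm]; exact hz'u)
    have h2 : T.ricB z' z' = T.ricB e e := hpair z' e hz'1 hel hz'e
    rw [h1, h2]
  -- diagonal values
  have hdiag : ∀ w : V, T.ricB w w = lam * ⟪w, w⟫ := by
    intro w
    by_cases hw : w = 0
    · simp [hw]
    · have hwn : ‖w‖ ≠ 0 := norm_ne_zero_iff.mpr hw
      set u : V := ‖w‖⁻¹ • w with hudef
      have hu1 : ‖u‖ = 1 := by
        rw [hudef, norm_smul, norm_inv, norm_norm]
        exact inv_mul_cancel₀ hwn
      have hwu : w = ‖w‖ • u := by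
        rw [hudef, smul_smul, mul_inv_cancel₀ hwn, one_smul]
      have h := hunit u hu1
      calc T.ricB w w = T.ricB (‖w‖ • u) (‖w‖ • u) := by rw [← hwu]
      _ = ‖w‖ * (‖w‖ * T.ricB u u) := by
          simp only [map_smul, LinearMap.smul_apply, smul_eq_mul]
      _ = lam * (‖w‖ * ‖w‖) := by rw [h]; ring
      _ = lam * ⟪w, w⟫ := by rw [real_inner_self_eq_norm_mul_norm]
  -- polarization
  have hmain : ∀ w η : V, T.ricB w η = lam * ⟪w, η⟫ := by
    intro w η
    have h1 := hdiag (w + η)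
    have h2 := hdiag w
    have h3 := hdiag η
    have hsym := T.ricB_symm w η
    simp only [map_add, LinearMap.add_apply] at h1
    have hq : ⟪w + η, w + η⟫ = ⟪w, w⟫ + 2 * ⟪w, η⟫ + ⟪η, η⟫ := real_inner_add_add_self w η
    rw [hq] at h1
    linarith
  refine ⟨lam, fun b w η => ?_⟩
  rw [← T.ricB_eq_sum b w η]
  exact hmain w η
end

section
/- Let (V, J, R) be an algebraic Kähler model of real dimension 2m with m ≥ 2. Then the following three conditions are equivalent: (a) ⟨R(X,JX)Y,JX⟩ = ⟨R(Y,JY)X,JY⟩ for all vectors X, Y ∈ V such that X, JX, Y, JY are orthonormal; (b) ⟨R(X,JX)Y,X⟩ = −⟨R(Y,JY)X,Y⟩ for all X, Y ∈ V such that X, JX, Y, JY are orthonormal; (c) ⟨R(X,Y)X,JY⟩ = 0 for all X, Y ∈ V such that X, JX, Y, JY are orthonormal. -/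
open RealInnerProductSpace Module

/-- An algebraic Kähler model: an algebraic curvature tensor together with a compatible
orthogonal complex structure `J`. -/
structure KahlerModel (V : Type*) [NormedAddCommGroup V] [InnerProductSpace ℝ V]
    extends CurvatureTensor V where
  J : V →ₗ[ℝ] V
  J_isometry : ∀ X Y, ⟪J X, J Y⟫ = ⟪X, Y⟫
  J_sq : ∀ X, J (J X) = -X
  R_J_invariant : ∀ X Y Z, R (J X) (J Y) Z = R X Y Z
  R_J_commute : ∀ X Y Z, R X Y (J Z) = J (R X Y Z)

namespace KahlerModel

variable {V : Type*} [NormedAddCommGroup V] [InnerProductSpace ℝ V] (T : KahlerModel V)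

lemma R_add₁ (X X' Y Z : V) : T.R (X + X') Y Z = T.R X Y Z + T.R X' Y Z :=
  (T.lin₁ Y Z).map_add X X'
lemma R_add₂ (X Y Y' Z : V) : T.R X (Y + Y') Z = T.R X Y Z + T.R X Y' Z :=
  (T.lin₂ X Z).map_add Y Y'
lemma R_add₃ (X Y Z Z' : V) : T.R X Y (Z + Z') = T.R X Y Z + T.R X Y Z' :=
  (T.lin₃ X Y).map_add Z Z'
lemma R_sub₁ (X X' Y Z : V) : T.R (X - X') Y Z = T.R X Y Z - T.R X' Y Z :=
  (T.lin₁ Y Z).map_sub X X'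
lemma R_sub₂ (X Y Y' Z : V) : T.R X (Y - Y') Z = T.R X Y Z - T.R X Y' Z :=
  (T.lin₂ X Z).map_sub Y Y'
lemma R_sub₃ (X Y Z Z' : V) : T.R X Y (Z - Z') = T.R X Y Z - T.R X Y Z' :=
  (T.lin₃ X Y).map_sub Z Z'
lemma R_neg₁ (X Y Z : V) : T.R (-X) Y Z = -T.R X Y Z := (T.lin₁ Y Z).map_neg X
lemma R_neg₂ (X Y Z : V) : T.R X (-Y) Z = -T.R X Y Z := (T.lin₂ X Z).map_neg Y
lemma R_neg₃ (X Y Z : V) : T.R X Y (-Z) = -T.R X Y Z := (T.lin₃ X Y).map_neg Z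
lemma R_smul₁ (c : ℝ) (X Y Z : V) : T.R (c • X) Y Z = c • T.R X Y Z :=
  (T.lin₁ Y Z).map_smul c X
lemma R_smul₂ (c : ℝ) (X Y Z : V) : T.R X (c • Y) Z = c • T.R X Y Z :=
  (T.lin₂ X Z).map_smul c Y
lemma R_smul₃ (c : ℝ) (X Y Z : V) : T.R X Y (c • Z) = c • T.R X Y Z :=
  (T.lin₃ X Y).map_smul c Z

lemma r_add₁ (X X' Y Z W : V) : ⟪T.R (X + X') Y Z, W⟫ = ⟪T.R X Y Z, W⟫ + ⟪T.R X' Y Z, W⟫ := by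
  rw [T.R_add₁, inner_add_left]
lemma r_add₂ (X Y Y' Z W : V) : ⟪T.R X (Y + Y') Z, W⟫ = ⟪T.R X Y Z, W⟫ + ⟪T.R X Y' Z, W⟫ := by
  rw [T.R_add₂, inner_add_left]
lemma r_add₃ (X Y Z Z' W : V) : ⟪T.R X Y (Z + Z'), W⟫ = ⟪T.R X Y Z, W⟫ + ⟪T.R X Y Z', W⟫ := by
  rw [T.R_add₃, inner_add_left]
lemma r_sub₁ (X X' Y Z W : V) : ⟪T.R (X - X') Y Z, W⟫ = ⟪T.R X Y Z, W⟫ - ⟪T.R X' Y Z, W⟫ := by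
  rw [T.R_sub₁, inner_sub_left]
lemma r_sub₂ (X Y Y' Z W : V) : ⟪T.R X (Y - Y') Z, W⟫ = ⟪T.R X Y Z, W⟫ - ⟪T.R X Y' Z, W⟫ := by
  rw [T.R_sub₂, inner_sub_left]
lemma r_sub₃ (X Y Z Z' W : V) : ⟪T.R X Y (Z - Z'), W⟫ = ⟪T.R X Y Z, W⟫ - ⟪T.R X Y Z', W⟫ := by
  rw [T.R_sub₃, inner_sub_left]
lemma r_neg₁ (X Y Z W : V) : ⟪T.R (-X) Y Z, W⟫ = -⟪T.R X Y Z, W⟫ := by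
  rw [T.R_neg₁, inner_neg_left]
lemma r_neg₂ (X Y Z W : V) : ⟪T.R X (-Y) Z, W⟫ = -⟪T.R X Y Z, W⟫ := by
  rw [T.R_neg₂, inner_neg_left]
lemma r_neg₃ (X Y Z W : V) : ⟪T.R X Y (-Z), W⟫ = -⟪T.R X Y Z, W⟫ := by
  rw [T.R_neg₃, inner_neg_left]
lemma r_smul₁ (c : ℝ) (X Y Z W : V) : ⟪T.R (c • X) Y Z, W⟫ = c * ⟪T.R X Y Z, W⟫ := by
  rw [T.R_smul₁, real_inner_smul_left]
lemma r_smul₂ (c : ℝ) (X Y Z W : V) : ⟪T.R X (c • Y) Z, W⟫ = c * ⟪T.R X Y Z, W⟫ := by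
  rw [T.R_smul₂, real_inner_smul_left]
lemma r_smul₃ (c : ℝ) (X Y Z W : V) : ⟪T.R X Y (c • Z), W⟫ = c * ⟪T.R X Y Z, W⟫ := by
  rw [T.R_smul₃, real_inner_smul_left]

lemma r_smul4 (c : ℝ) (A B C D : V) :
    ⟪T.R (c • A) (c • B) (c • C), c • D⟫ = c ^ 4 * ⟪T.R A B C, D⟫ := by
  rw [T.r_smul₁, T.r_smul₂, T.r_smul₃, real_inner_smul_right]; ring

lemma r_bianchi (X Y Z W : V) :
    ⟪T.R X Y Z, W⟫ + ⟪T.R Y Z X, W⟫ + ⟪T.R Z X Y, W⟫ = 0 := by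
  have h := congrArg (fun v => (inner ℝ v W : ℝ)) (T.bianchi X Y Z)
  simpa [inner_add_left] using h

lemma r_J12 (X Y Z W : V) : ⟪T.R (T.J X) (T.J Y) Z, W⟫ = ⟪T.R X Y Z, W⟫ := by
  rw [T.R_J_invariant]

lemma r_J34 (X Y Z W : V) : ⟪T.R X Y (T.J Z), T.J W⟫ = ⟪T.R X Y Z, W⟫ := by
  rw [T.R_J_commute, T.J_isometry]

lemma r_J1 (X Y Z W : V) : ⟪T.R (T.J X) Y Z, W⟫ = -⟪T.R X (T.J Y) Z, W⟫ := by
  have h : T.R (T.J X) Y Z = T.R (T.J (T.J X)) (T.J Y) Z := (T.R_J_invariant (T.J X) Y Z).symm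
  rw [h, T.J_sq, T.R_neg₁, inner_neg_left]

lemma r_J3 (X Y Z W : V) : ⟪T.R X Y (T.J Z), W⟫ = -⟪T.R X Y Z, T.J W⟫ := by
  rw [T.R_J_commute]
  have : (⟪T.J (T.R X Y Z), W⟫ : ℝ) = ⟪T.J (T.J (T.R X Y Z)), T.J W⟫ :=
    (T.J_isometry _ _).symm
  rw [this, T.J_sq, inner_neg_left]

lemma inner_J_self (a : V) : ⟪a, T.J a⟫ = 0 := by
  have h1 : (⟪a, T.J a⟫ : ℝ) = ⟪T.J a, T.J (T.J a)⟫ := (T.J_isometry a (T.J a)).symm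
  rw [T.J_sq, inner_neg_right] at h1
  have h2 : (⟪T.J a, a⟫ : ℝ) = ⟪a, T.J a⟫ := real_inner_comm _ _
  linarith

lemma on4_of {a b : V} (ha : ⟪a, a⟫ = 1) (hb : ⟪b, b⟫ = 1)
    (hab : ⟪a, b⟫ = 0) (haJb : ⟪a, T.J b⟫ = 0) :
    Orthonormal ℝ ![a, T.J a, b, T.J b] := by
  have hJaJb : (⟪T.J a, T.J b⟫ : ℝ) = 0 := by rw [T.J_isometry]; exact hab
  have hJab : (⟪T.J a, b⟫ : ℝ) = 0 := by
    have : (⟪T.J a, b⟫ : ℝ) = ⟪T.J (T.J a), T.J b⟫ := (T.J_isometry _ _).symm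
    rw [this, T.J_sq, inner_neg_left, haJb, neg_zero]
  have hJaJa : (⟪T.J a, T.J a⟫ : ℝ) = 1 := by rw [T.J_isometry]; exact ha
  have hJbJb : (⟪T.J b, T.J b⟫ : ℝ) = 1 := by rw [T.J_isometry]; exact hb
  have haJa := T.inner_J_self a
  have hbJb := T.inner_J_self b
  rw [orthonormal_iff_ite]
  intro i j
  fin_cases i <;> fin_cases j <;>
    simp_all [real_inner_comm a b, real_inner_comm a (T.J a), real_inner_comm a (T.J b),
      real_inner_comm b (T.J a), real_inner_comm b (T.J b), real_inner_comm (T.J a) (T.J b)]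

end KahlerModel

set_option maxHeartbeats 1600000 in
theorem xy_equivalences {V : Type*} [NormedAddCommGroup V] [InnerProductSpace ℝ V] [FiniteDimensional ℝ V]
    (T : KahlerModel V) (m : ℕ) (hm : 2 ≤ m) (hdim : finrank ℝ V = 2 * m) :
    [(∀ X Y : V, Orthonormal ℝ ![X, T.J X, Y, T.J Y] →
        ⟪T.R X (T.J X) Y, T.J X⟫ = ⟪T.R Y (T.J Y) X, T.J Y⟫),
     (∀ X Y : V, Orthonormal ℝ ![X, T.J X, Y, T.J Y] →
        ⟪T.R X (T.J X) Y, X⟫ = -⟪T.R Y (T.J Y) X, Y⟫),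
     (∀ X Y : V, Orthonormal ℝ ![X, T.J X, Y, T.J Y] →
        ⟪T.R X Y X, T.J Y⟫ = 0)].TFAE := by
  have h13 : (∀ X Y : V, Orthonormal ℝ ![X, T.J X, Y, T.J Y] →
        ⟪T.R X (T.J X) Y, T.J X⟫ = ⟪T.R Y (T.J Y) X, T.J Y⟫) →
      (∀ X Y : V, Orthonormal ℝ ![X, T.J X, Y, T.J Y] →
        ⟪T.R X Y X, T.J Y⟫ = 0) := by
    intro hyp X Y ho
    have ho' := orthonormal_iff_ite.mp ho
    have e00 : (⟪X, X⟫ : ℝ) = 1 := by simpa using ho' 0 0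
    have e01 : (⟪X, T.J X⟫ : ℝ) = 0 := by simpa using ho' 0 1
    have e02 : (⟪X, Y⟫ : ℝ) = 0 := by simpa using ho' 0 2
    have e03 : (⟪X, T.J Y⟫ : ℝ) = 0 := by simpa using ho' 0 3
    have e10 : (⟪T.J X, X⟫ : ℝ) = 0 := by simpa using ho' 1 0
    have e11 : (⟪T.J X, T.J X⟫ : ℝ) = 1 := by simpa using ho' 1 1
    have e12 : (⟪T.J X, Y⟫ : ℝ) = 0 := by simpa using ho' 1 2
    have e13 : (⟪T.J X, T.J Y⟫ : ℝ) = 0 := by simpa using ho' 1 3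
    have e20 : (⟪Y, X⟫ : ℝ) = 0 := by simpa using ho' 2 0
    have e21 : (⟪Y, T.J X⟫ : ℝ) = 0 := by simpa using ho' 2 1
    have e22 : (⟪Y, Y⟫ : ℝ) = 1 := by simpa using ho' 2 2
    have e23 : (⟪Y, T.J Y⟫ : ℝ) = 0 := by simpa using ho' 2 3
    have e30 : (⟪T.J Y, X⟫ : ℝ) = 0 := by simpa using ho' 3 0
    have e31 : (⟪T.J Y, T.J X⟫ : ℝ) = 0 := by simpa using ho' 3 1
    have e32 : (⟪T.J Y, Y⟫ : ℝ) = 0 := by simpa using ho' 3 2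
    have e33 : (⟪T.J Y, T.J Y⟫ : ℝ) = 1 := by simpa using ho' 3 3
    have hs : (0:ℝ) < Real.sqrt 2 := Real.sqrt_pos.mpr (by norm_num)
    have hc : ((Real.sqrt 2)⁻¹ : ℝ) ≠ 0 := inv_ne_zero hs.ne'
    have hcc : ((Real.sqrt 2)⁻¹ : ℝ) * (Real.sqrt 2)⁻¹ = 1/2 := by
      rw [← mul_inv, Real.mul_self_sqrt (by norm_num)]; norm_num
    have f1 : (⟪(Real.sqrt 2)⁻¹ • (X + Y), (Real.sqrt 2)⁻¹ • (X + Y)⟫ : ℝ) = 1 := by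
      simp only [real_inner_smul_left, real_inner_smul_right, inner_add_left, inner_add_right, inner_sub_left, inner_sub_right, inner_neg_left, inner_neg_right, map_smul, map_add, map_sub, T.J_sq, e00, e01, e02, e03, e10, e11, e12, e13, e20, e21, e22, e23, e30, e31, e32, e33]
      linear_combination (2:ℝ) * hcc
    have f2 : (⟪(Real.sqrt 2)⁻¹ • (T.J X - T.J Y), (Real.sqrt 2)⁻¹ • (T.J X - T.J Y)⟫ : ℝ) = 1 := by
      simp only [real_inner_smul_left, real_inner_smul_right, inner_add_left, inner_add_right, inner_sub_left, inner_sub_right, inner_neg_left, inner_neg_right, map_smul, map_add, map_sub, T.J_sq, e00, e01, e02, e03, e10, e11, e12, e13, e20, e21, e22, e23, e30, e31, e32, e33]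
      linear_combination (2:ℝ) * hcc
    have f3 : (⟪(Real.sqrt 2)⁻¹ • (X + Y), (Real.sqrt 2)⁻¹ • (T.J X - T.J Y)⟫ : ℝ) = 0 := by
      simp only [real_inner_smul_left, real_inner_smul_right, inner_add_left, inner_add_right, inner_sub_left, inner_sub_right, inner_neg_left, inner_neg_right, map_smul, map_add, map_sub, T.J_sq, e00, e01, e02, e03, e10, e11, e12, e13, e20, e21, e22, e23, e30, e31, e32, e33]
      linear_combination (0:ℝ) * hcc
    have f4 : (⟪(Real.sqrt 2)⁻¹ • (X + Y), T.J ((Real.sqrt 2)⁻¹ • (T.J X - T.J Y))⟫ : ℝ) = 0 := by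
      simp only [real_inner_smul_left, real_inner_smul_right, inner_add_left, inner_add_right, inner_sub_left, inner_sub_right, inner_neg_left, inner_neg_right, map_smul, map_add, map_sub, T.J_sq, e00, e01, e02, e03, e10, e11, e12, e13, e20, e21, e22, e23, e30, e31, e32, e33]
      linear_combination (0:ℝ) * hcc
    have h := hyp ((Real.sqrt 2)⁻¹ • (X + Y)) ((Real.sqrt 2)⁻¹ • (T.J X - T.J Y))
      (T.on4_of f1 f2 f3 f4)
    simp only [map_smul, map_add, map_sub, T.J_sq, sub_neg_eq_add] at h
    rw [T.r_smul4, T.r_smul4] at h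
    have h' := mul_left_cancel₀ (pow_ne_zero 4 hc) h
    simp only [T.r_add₁, T.r_add₂, T.r_add₃, inner_add_right, T.r_sub₁, T.r_sub₂, T.r_sub₃,
      inner_sub_right, T.r_neg₁, T.r_neg₂, T.r_neg₃, inner_neg_right] at h'
    linear_combination (1/8 : ℝ) * (h') +
      (-1/16 : ℝ) * (T.antisymm₁ X X X (T.J X)) +
      (1/8 : ℝ) * (T.antisymm₂ X X X (T.J X)) +
      (1/16 : ℝ) * (T.antisymm₁ X X X (T.J Y)) +
      (-1/8 : ℝ) * (T.antisymm₂ X X X (T.J Y)) +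
      (-1/8 : ℝ) * (T.pair_symm X X (T.J X) X) +
      (1/8 : ℝ) * (T.pair_symm X X (T.J X) Y) +
      (-1/8 : ℝ) * (T.r_bianchi X X (T.J X) Y) +
      (1/16 : ℝ) * (T.antisymm₁ X X Y (T.J Y)) +
      (-1/8 : ℝ) * (T.pair_symm X X Y (T.J Y)) +
      (1/8 : ℝ) * (T.pair_symm X X (T.J Y) X) +
      (-1/8 : ℝ) * (T.pair_symm X X (T.J Y) Y) +
      (1/8 : ℝ) * (T.r_bianchi X X (T.J Y) Y) +
      (-1/8 : ℝ) * (T.antisymm₂ X (T.J X) X Y) +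
      (1/4 : ℝ) * (T.pair_symm X (T.J X) X Y) +
      (-1/16 : ℝ) * (T.antisymm₂ X (T.J X) (T.J X) (T.J X)) +
      (-1/8 : ℝ) * (T.pair_symm X (T.J X) (T.J X) (T.J Y)) +
      (1/8 : ℝ) * (T.antisymm₁ X (T.J X) Y X) +
      (-1/8 : ℝ) * (T.antisymm₁ X (T.J X) Y Y) +
      (3/16 : ℝ) * (T.antisymm₂ X (T.J X) Y Y) +
      (-1/4 : ℝ) * (T.r_bianchi X (T.J X) Y Y) +
      (1/8 : ℝ) * (T.r_bianchi X (T.J X) (T.J Y) (T.J X)) +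
      (-1/16 : ℝ) * (T.antisymm₂ X (T.J X) (T.J Y) (T.J Y)) +
      (1/4 : ℝ) * (T.r_bianchi X (T.J X) (T.J Y) (T.J Y)) +
      (1/8 : ℝ) * (T.antisymm₂ X Y X (T.J Y)) +
      (5/8 : ℝ) * (T.pair_symm X Y X (T.J Y)) +
      (1/4 : ℝ) * (T.antisymm₁ X Y (T.J X) Y) +
      (-3/8 : ℝ) * (T.antisymm₂ X Y Y (T.J Y)) +
      (1/8 : ℝ) * (T.pair_symm X Y Y (T.J Y)) +
      (-1/8 : ℝ) * (T.r_bianchi X Y (T.J Y) X) +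
      (1/8 : ℝ) * (T.antisymm₁ X Y (T.J Y) Y) +
      (1/8 : ℝ) * (T.pair_symm X Y (T.J Y) Y) +
      (1/8 : ℝ) * (T.r_bianchi X Y (T.J Y) Y) +
      (-1/8 : ℝ) * (T.antisymm₁ X (T.J Y) (T.J X) (T.J X)) +
      (-1/4 : ℝ) * (T.antisymm₁ X (T.J Y) (T.J X) (T.J Y)) +
      (1/8 : ℝ) * (T.antisymm₂ X (T.J Y) (T.J X) (T.J Y)) +
      (1/16 : ℝ) * (T.antisymm₂ X (T.J Y) (T.J Y) (T.J Y)) +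
      (1/16 : ℝ) * (T.antisymm₁ (T.J X) (T.J X) (T.J X) Y) +
      (-1/8 : ℝ) * (T.antisymm₂ (T.J X) (T.J X) (T.J X) Y) +
      (1/8 : ℝ) * (T.pair_symm (T.J X) (T.J X) Y (T.J X)) +
      (1/8 : ℝ) * (T.pair_symm (T.J X) (T.J X) Y (T.J Y)) +
      (-1/8 : ℝ) * (T.r_bianchi (T.J X) (T.J X) Y (T.J Y)) +
      (-1/8 : ℝ) * (T.antisymm₂ (T.J X) Y X Y) +
      (-1/8 : ℝ) * (T.antisymm₂ (T.J X) Y (T.J X) (T.J Y)) +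
      (1/4 : ℝ) * (T.pair_symm (T.J X) Y (T.J X) (T.J Y)) +
      (1/16 : ℝ) * (T.antisymm₂ (T.J X) Y Y Y) +
      (1/8 : ℝ) * (T.antisymm₁ (T.J X) Y (T.J Y) (T.J X)) +
      (1/8 : ℝ) * (T.antisymm₁ (T.J X) Y (T.J Y) (T.J Y)) +
      (1/16 : ℝ) * (T.antisymm₂ (T.J X) Y (T.J Y) (T.J Y)) +
      (-1/4 : ℝ) * (T.r_bianchi (T.J X) Y (T.J Y) (T.J Y)) +
      (1/4 : ℝ) * (T.antisymm₁ (T.J X) (T.J Y) Y (T.J Y)) +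
      (-1/8 : ℝ) * (T.pair_symm Y X (T.J Y) Y) +
      (1/16 : ℝ) * (T.antisymm₁ Y Y Y (T.J Y)) +
      (-1/8 : ℝ) * (T.antisymm₂ Y Y Y (T.J Y)) +
      (1/8 : ℝ) * (T.pair_symm Y Y (T.J Y) Y) +
      (1/8 : ℝ) * (T.antisymm₂ Y (T.J Y) (T.J X) (T.J Y)) +
      (1/16 : ℝ) * (T.antisymm₂ Y (T.J Y) (T.J Y) (T.J Y)) +
      (-1/4 : ℝ) * (T.r_J12 X Y X (T.J X)) +
      (-1/4 : ℝ) * (T.r_J12 X Y X (T.J Y)) +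
      (1/4 : ℝ) * (T.r_J12 X Y (T.J X) Y) +
      (-1/4 : ℝ) * (T.r_J12 X Y Y (T.J Y)) +
      (1/2 : ℝ) * (T.r_J1 X Y X Y)
  have h32 : (∀ X Y : V, Orthonormal ℝ ![X, T.J X, Y, T.J Y] →
        ⟪T.R X Y X, T.J Y⟫ = 0) →
      (∀ X Y : V, Orthonormal ℝ ![X, T.J X, Y, T.J Y] →
        ⟪T.R X (T.J X) Y, X⟫ = -⟪T.R Y (T.J Y) X, Y⟫) := by
    intro hyp X Y ho
    have ho' := orthonormal_iff_ite.mp ho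
    have e00 : (⟪X, X⟫ : ℝ) = 1 := by simpa using ho' 0 0
    have e01 : (⟪X, T.J X⟫ : ℝ) = 0 := by simpa using ho' 0 1
    have e02 : (⟪X, Y⟫ : ℝ) = 0 := by simpa using ho' 0 2
    have e03 : (⟪X, T.J Y⟫ : ℝ) = 0 := by simpa using ho' 0 3
    have e10 : (⟪T.J X, X⟫ : ℝ) = 0 := by simpa using ho' 1 0
    have e11 : (⟪T.J X, T.J X⟫ : ℝ) = 1 := by simpa using ho' 1 1
    have e12 : (⟪T.J X, Y⟫ : ℝ) = 0 := by simpa using ho' 1 2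
    have e13 : (⟪T.J X, T.J Y⟫ : ℝ) = 0 := by simpa using ho' 1 3
    have e20 : (⟪Y, X⟫ : ℝ) = 0 := by simpa using ho' 2 0
    have e21 : (⟪Y, T.J X⟫ : ℝ) = 0 := by simpa using ho' 2 1
    have e22 : (⟪Y, Y⟫ : ℝ) = 1 := by simpa using ho' 2 2
    have e23 : (⟪Y, T.J Y⟫ : ℝ) = 0 := by simpa using ho' 2 3
    have e30 : (⟪T.J Y, X⟫ : ℝ) = 0 := by simpa using ho' 3 0
    have e31 : (⟪T.J Y, T.J X⟫ : ℝ) = 0 := by simpa using ho' 3 1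
    have e32 : (⟪T.J Y, Y⟫ : ℝ) = 0 := by simpa using ho' 3 2
    have e33 : (⟪T.J Y, T.J Y⟫ : ℝ) = 1 := by simpa using ho' 3 3
    have hs : (0:ℝ) < Real.sqrt 2 := Real.sqrt_pos.mpr (by norm_num)
    have hc : ((Real.sqrt 2)⁻¹ : ℝ) ≠ 0 := inv_ne_zero hs.ne'
    have hcc : ((Real.sqrt 2)⁻¹ : ℝ) * (Real.sqrt 2)⁻¹ = 1/2 := by
      rw [← mul_inv, Real.mul_self_sqrt (by norm_num)]; norm_num
    have f1 : (⟪(Real.sqrt 2)⁻¹ • (X + Y), (Real.sqrt 2)⁻¹ • (X + Y)⟫ : ℝ) = 1 := by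
      simp only [real_inner_smul_left, real_inner_smul_right, inner_add_left, inner_add_right, inner_sub_left, inner_sub_right, inner_neg_left, inner_neg_right, map_smul, map_add, map_sub, T.J_sq, e00, e01, e02, e03, e10, e11, e12, e13, e20, e21, e22, e23, e30, e31, e32, e33]
      linear_combination (2:ℝ) * hcc
    have f2 : (⟪(Real.sqrt 2)⁻¹ • (X - Y), (Real.sqrt 2)⁻¹ • (X - Y)⟫ : ℝ) = 1 := by
      simp only [real_inner_smul_left, real_inner_smul_right, inner_add_left, inner_add_right, inner_sub_left, inner_sub_right, inner_neg_left, inner_neg_right, map_smul, map_add, map_sub, T.J_sq, e00, e01, e02, e03, e10, e11, e12, e13, e20, e21, e22, e23, e30, e31, e32, e33]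
      linear_combination (2:ℝ) * hcc
    have f3 : (⟪(Real.sqrt 2)⁻¹ • (X + Y), (Real.sqrt 2)⁻¹ • (X - Y)⟫ : ℝ) = 0 := by
      simp only [real_inner_smul_left, real_inner_smul_right, inner_add_left, inner_add_right, inner_sub_left, inner_sub_right, inner_neg_left, inner_neg_right, map_smul, map_add, map_sub, T.J_sq, e00, e01, e02, e03, e10, e11, e12, e13, e20, e21, e22, e23, e30, e31, e32, e33]
      linear_combination (0:ℝ) * hcc
    have f4 : (⟪(Real.sqrt 2)⁻¹ • (X + Y), T.J ((Real.sqrt 2)⁻¹ • (X - Y))⟫ : ℝ) = 0 := by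
      simp only [real_inner_smul_left, real_inner_smul_right, inner_add_left, inner_add_right, inner_sub_left, inner_sub_right, inner_neg_left, inner_neg_right, map_smul, map_add, map_sub, T.J_sq, e00, e01, e02, e03, e10, e11, e12, e13, e20, e21, e22, e23, e30, e31, e32, e33]
      linear_combination (0:ℝ) * hcc
    have h := hyp ((Real.sqrt 2)⁻¹ • (X + Y)) ((Real.sqrt 2)⁻¹ • (X - Y))
      (T.on4_of f1 f2 f3 f4)
    simp only [map_smul, map_add, map_sub, T.J_sq, sub_neg_eq_add] at h
    rw [T.r_smul4] at h
    have h' := (mul_eq_zero.mp h).resolve_left (pow_ne_zero 4 hc)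
    simp only [T.r_add₁, T.r_add₂, T.r_add₃, inner_add_right, T.r_sub₁, T.r_sub₂, T.r_sub₃,
      inner_sub_right, T.r_neg₁, T.r_neg₂, T.r_neg₃, inner_neg_right] at h'
    linear_combination (1/2 : ℝ) * (h') +
      (-1/4 : ℝ) * (T.antisymm₁ X X X (T.J X)) +
      (1/4 : ℝ) * (T.antisymm₁ X X X (T.J Y)) +
      (-1/2 : ℝ) * (T.r_bianchi X X Y (T.J X)) +
      (1/2 : ℝ) * (T.r_bianchi X X Y (T.J Y)) +
      (1 : ℝ) * (T.antisymm₂ X (T.J X) X Y) +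
      (-1 : ℝ) * (T.pair_symm X (T.J X) X Y) +
      (-1/4 : ℝ) * (T.antisymm₂ X (T.J X) Y Y) +
      (-1/2 : ℝ) * (T.pair_symm X (T.J X) Y Y) +
      (1 : ℝ) * (T.r_bianchi X (T.J X) Y Y) +
      (-1 : ℝ) * (T.pair_symm X Y X (T.J Y)) +
      (-1 : ℝ) * (T.antisymm₁ X Y (T.J X) Y) +
      (1 : ℝ) * (T.antisymm₂ X Y (T.J X) Y) +
      (-1/2 : ℝ) * (T.antisymm₁ X Y Y (T.J X)) +
      (1 : ℝ) * (T.antisymm₁ X Y Y (T.J Y)) +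
      (-1 : ℝ) * (T.pair_symm X Y Y (T.J Y)) +
      (-1/2 : ℝ) * (T.r_bianchi X Y Y (T.J Y)) +
      (1/2 : ℝ) * (T.antisymm₁ (T.J X) Y Y Y) +
      (-1/4 : ℝ) * (T.antisymm₂ (T.J X) Y Y Y) +
      (-1/2 : ℝ) * (T.pair_symm Y (T.J X) Y Y) +
      (-1/4 : ℝ) * (T.antisymm₁ Y Y Y (T.J Y)) +
      (-1 : ℝ) * (T.r_J1 X Y X Y)
  have h21 : (∀ X Y : V, Orthonormal ℝ ![X, T.J X, Y, T.J Y] →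
        ⟪T.R X (T.J X) Y, X⟫ = -⟪T.R Y (T.J Y) X, Y⟫) →
      (∀ X Y : V, Orthonormal ℝ ![X, T.J X, Y, T.J Y] →
        ⟪T.R X (T.J X) Y, T.J X⟫ = ⟪T.R Y (T.J Y) X, T.J Y⟫) := by
    intro hyp X Y ho
    have ho' := orthonormal_iff_ite.mp ho
    have e00 : (⟪X, X⟫ : ℝ) = 1 := by simpa using ho' 0 0
    have e01 : (⟪X, T.J X⟫ : ℝ) = 0 := by simpa using ho' 0 1
    have e02 : (⟪X, Y⟫ : ℝ) = 0 := by simpa using ho' 0 2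
    have e03 : (⟪X, T.J Y⟫ : ℝ) = 0 := by simpa using ho' 0 3
    have e10 : (⟪T.J X, X⟫ : ℝ) = 0 := by simpa using ho' 1 0
    have e11 : (⟪T.J X, T.J X⟫ : ℝ) = 1 := by simpa using ho' 1 1
    have e12 : (⟪T.J X, Y⟫ : ℝ) = 0 := by simpa using ho' 1 2
    have e13 : (⟪T.J X, T.J Y⟫ : ℝ) = 0 := by simpa using ho' 1 3
    have e20 : (⟪Y, X⟫ : ℝ) = 0 := by simpa using ho' 2 0
    have e21 : (⟪Y, T.J X⟫ : ℝ) = 0 := by simpa using ho' 2 1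
    have e22 : (⟪Y, Y⟫ : ℝ) = 1 := by simpa using ho' 2 2
    have e23 : (⟪Y, T.J Y⟫ : ℝ) = 0 := by simpa using ho' 2 3
    have e30 : (⟪T.J Y, X⟫ : ℝ) = 0 := by simpa using ho' 3 0
    have e31 : (⟪T.J Y, T.J X⟫ : ℝ) = 0 := by simpa using ho' 3 1
    have e32 : (⟪T.J Y, Y⟫ : ℝ) = 0 := by simpa using ho' 3 2
    have e33 : (⟪T.J Y, T.J Y⟫ : ℝ) = 1 := by simpa using ho' 3 3
    have g2 : (⟪T.J Y, T.J Y⟫ : ℝ) = 1 := by rw [T.J_isometry]; exact e22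
    have g4 : (⟪X, T.J (T.J Y)⟫ : ℝ) = 0 := by
      rw [T.J_sq, inner_neg_right, e02, neg_zero]
    have h := hyp X (T.J Y) (T.on4_of e00 g2 e03 g4)
    simp only [T.J_sq, T.r_neg₂, neg_neg] at h
    linear_combination (-1 : ℝ) * (h) +
      (1 : ℝ) * (T.antisymm₂ X (T.J X) X (T.J Y)) +
      (-1 : ℝ) * (T.pair_symm X (T.J X) X (T.J Y)) +
      (1 : ℝ) * (T.antisymm₂ X (T.J X) (T.J X) Y) +
      (-1 : ℝ) * (T.pair_symm X (T.J X) (T.J X) Y) +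
      (1 : ℝ) * (T.antisymm₁ X Y (T.J Y) (T.J Y)) +
      (-1 : ℝ) * (T.r_bianchi X Y (T.J Y) (T.J Y)) +
      (1 : ℝ) * (T.antisymm₁ X (T.J Y) Y (T.J Y)) +
      (-1 : ℝ) * (T.r_bianchi X (T.J Y) Y (T.J Y)) +
      (-1 : ℝ) * (T.r_J1 X Y X (T.J X))
  tfae_finish
end

section
/- Let (V, J, R) be an algebraic Kähler model of real dimension 2m with m ≥ 3 satisfying the XY-condition. Then for all vectors X, Y, Z ∈ V such that X, JX, Y, JY, Z, JZ are orthonormal, one has ⟨R(X,JX)Y,JX⟩ = 2⟨R(Z,JZ)X,JY⟩ = 4⟨R(Z,X)Z,Y⟩ = 4⟨R(JZ,X)JZ,Y⟩. -/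
open RealInnerProductSpace Module

/-- The XY-condition: `⟪R(X,JX)Y, JX⟫ = ⟪R(Y,JY)X, JY⟫` whenever `X, JX, Y, JY`
are orthonormal. -/
def KahlerModel.XYCond {V : Type*} [NormedAddCommGroup V] [InnerProductSpace ℝ V]
    (T : KahlerModel V) : Prop :=
  ∀ X Y : V, Orthonormal ℝ ![X, T.J X, Y, T.J Y] →
    ⟪T.R X (T.J X) Y, T.J X⟫ = ⟪T.R Y (T.J Y) X, T.J Y⟫


section Helpers

variable {V : Type*} [NormedAddCommGroup V] [InnerProductSpace ℝ V]

lemma R_add1 (T : KahlerModel V) (u v w x : V) :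
    T.R (u + v) w x = T.R u w x + T.R v w x := (T.lin₁ w x).map_add u v
lemma R_add2 (T : KahlerModel V) (u v w x : V) :
    T.R w (u + v) x = T.R w u x + T.R w v x := (T.lin₂ w x).map_add u v
lemma R_add3 (T : KahlerModel V) (u v w x : V) :
    T.R w x (u + v) = T.R w x u + T.R w x v := (T.lin₃ w x).map_add u v
lemma R_smul1 (T : KahlerModel V) (c : ℝ) (u w x : V) :
    T.R (c • u) w x = c • T.R u w x := (T.lin₁ w x).map_smul c u
lemma R_smul2 (T : KahlerModel V) (c : ℝ) (u w x : V) :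
    T.R w (c • u) x = c • T.R w u x := (T.lin₂ w x).map_smul c u
lemma R_smul3 (T : KahlerModel V) (c : ℝ) (u w x : V) :
    T.R w x (c • u) = c • T.R w x u := (T.lin₃ w x).map_smul c u
lemma R_neg1 (T : KahlerModel V) (u w x : V) :
    T.R (-u) w x = -T.R u w x := (T.lin₁ w x).map_neg u
lemma R_neg2 (T : KahlerModel V) (u w x : V) :
    T.R w (-u) x = -T.R w u x := (T.lin₂ w x).map_neg u
lemma R_neg3 (T : KahlerModel V) (u w x : V) :
    T.R w x (-u) = -T.R w x u := (T.lin₃ w x).map_neg u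

lemma SB (T : KahlerModel V) (a b c d : V) :
    ⟪T.R a b c, d⟫ + ⟪T.R b c a, d⟫ + ⟪T.R c a b, d⟫ = 0 := by
  have h2 : ⟪T.R a b c + T.R b c a + T.R c a b, d⟫ = (0:ℝ) := by
    rw [T.bianchi a b c]; exact inner_zero_left d
  simpa [inner_add_left] using h2

lemma Jskew (T : KahlerModel V) (x y : V) : ⟪T.J x, y⟫ = -⟪x, T.J y⟫ := by
  have h1 : ⟪T.J x, T.J (T.J y)⟫ = ⟪x, T.J y⟫ := T.J_isometry _ _
  rw [T.J_sq, inner_neg_right] at h1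
  linarith

lemma SJ3 (T : KahlerModel V) (a b c d : V) :
    ⟪T.R a b (T.J c), d⟫ = -⟪T.R a b c, T.J d⟫ := by
  rw [T.R_J_commute, Jskew]

lemma SJJ34 (T : KahlerModel V) (a b c d : V) :
    ⟪T.R a b (T.J c), T.J d⟫ = ⟪T.R a b c, d⟫ := by
  rw [T.R_J_commute, T.J_isometry]

lemma SJJ12 (T : KahlerModel V) (a b c d : V) :
    ⟪T.R (T.J a) (T.J b) c, d⟫ = ⟪T.R a b c, d⟫ := by
  rw [T.R_J_invariant]

lemma SJ1 (T : KahlerModel V) (a b c d : V) :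
    ⟪T.R (T.J a) b c, d⟫ = -⟪T.R a (T.J b) c, d⟫ := by
  have h1 : T.R (T.J a) (T.J (T.J b)) c = T.R a (T.J b) c := T.R_J_invariant _ _ _
  rw [T.J_sq, R_neg2] at h1
  rw [← h1, inner_neg_left, neg_neg]

lemma J_self_inner (T : KahlerModel V) (x : V) : ⟪x, T.J x⟫ = 0 := by
  have h1 := Jskew T x x
  have h2 := real_inner_comm (T.J x) x
  linarith

lemma on_aux (T : KahlerModel V) (u v : V) (huu : ⟪u, u⟫ = 1) (hvv : ⟪v, v⟫ = 1)
    (huv : ⟪u, v⟫ = 0) (hujv : ⟪u, T.J v⟫ = 0) :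
    Orthonormal ℝ ![u, T.J u, v, T.J v] := by
  have e01 : ⟪u, T.J u⟫ = 0 := J_self_inner T u
  have e10 : ⟪T.J u, u⟫ = 0 := by rw [real_inner_comm]; exact e01
  have e11 : ⟪T.J u, T.J u⟫ = 1 := by rw [T.J_isometry]; exact huu
  have e20 : ⟪v, u⟫ = 0 := by rw [real_inner_comm]; exact huv
  have e30 : ⟪T.J v, u⟫ = 0 := by rw [real_inner_comm]; exact hujv
  have e12 : ⟪T.J u, v⟫ = 0 := by rw [Jskew T u v, hujv, neg_zero]
  have e21 : ⟪v, T.J u⟫ = 0 := by rw [real_inner_comm]; exact e12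
  have e13 : ⟪T.J u, T.J v⟫ = 0 := by rw [T.J_isometry]; exact huv
  have e31 : ⟪T.J v, T.J u⟫ = 0 := by rw [real_inner_comm]; exact e13
  have e23 : ⟪v, T.J v⟫ = 0 := J_self_inner T v
  have e32 : ⟪T.J v, v⟫ = 0 := by rw [real_inner_comm]; exact e23
  have e33 : ⟪T.J v, T.J v⟫ = 1 := by rw [T.J_isometry]; exact hvv
  have n0 : ‖u‖ = 1 := by have := real_inner_self_eq_norm_sq u; nlinarith [norm_nonneg u]
  have n1 : ‖T.J u‖ = 1 := by have := real_inner_self_eq_norm_sq (T.J u); nlinarith [norm_nonneg (T.J u)]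
  have n2 : ‖v‖ = 1 := by have := real_inner_self_eq_norm_sq v; nlinarith [norm_nonneg v]
  have n3 : ‖T.J v‖ = 1 := by have := real_inner_self_eq_norm_sq (T.J v); nlinarith [norm_nonneg (T.J v)]
  rw [orthonormal_iff_ite]
  intro i j
  fin_cases i <;> fin_cases j <;>
    simp [huu, hvv, huv, hujv, e01, e10, e11, e20, e30, e12, e21, e13, e31, e23, e32, e33, n0, n1, n2, n3]

end Helpers

theorem ZJZ_property {V : Type*} [NormedAddCommGroup V] [InnerProductSpace ℝ V] [FiniteDimensional ℝ V]
    (T : KahlerModel V) (m : ℕ) (hm : 3 ≤ m) (hdim : finrank ℝ V = 2 * m)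
    (hxy : T.XYCond)
    (X Y Z : V) (h : Orthonormal ℝ ![X, T.J X, Y, T.J Y, Z, T.J Z]) :
    ⟪T.R X (T.J X) Y, T.J X⟫ = 2 * ⟪T.R Z (T.J Z) X, T.J Y⟫ ∧
    ⟪T.R X (T.J X) Y, T.J X⟫ = 4 * ⟪T.R Z X Z, Y⟫ ∧
    ⟪T.R X (T.J X) Y, T.J X⟫ = 4 * ⟪T.R (T.J Z) X (T.J Z), Y⟫ := by
  have horth := orthonormal_iff_ite.mp h
  have hb00 : ⟪X, X⟫ = (1:ℝ) := by simpa using horth 0 0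
  have hb01 : ⟪X, (T.J X)⟫ = (0:ℝ) := by simpa using horth 0 1
  have hb02 : ⟪X, Y⟫ = (0:ℝ) := by simpa using horth 0 2
  have hb03 : ⟪X, (T.J Y)⟫ = (0:ℝ) := by simpa using horth 0 3
  have hb04 : ⟪X, Z⟫ = (0:ℝ) := by simpa using horth 0 4
  have hb05 : ⟪X, (T.J Z)⟫ = (0:ℝ) := by simpa using horth 0 5
  have hb10 : ⟪(T.J X), X⟫ = (0:ℝ) := by simpa using horth 1 0
  have hb11 : ⟪(T.J X), (T.J X)⟫ = (1:ℝ) := by simpa using horth 1 1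
  have hb12 : ⟪(T.J X), Y⟫ = (0:ℝ) := by simpa using horth 1 2
  have hb13 : ⟪(T.J X), (T.J Y)⟫ = (0:ℝ) := by simpa using horth 1 3
  have hb14 : ⟪(T.J X), Z⟫ = (0:ℝ) := by simpa using horth 1 4
  have hb15 : ⟪(T.J X), (T.J Z)⟫ = (0:ℝ) := by simpa using horth 1 5
  have hb20 : ⟪Y, X⟫ = (0:ℝ) := by simpa using horth 2 0
  have hb21 : ⟪Y, (T.J X)⟫ = (0:ℝ) := by simpa using horth 2 1
  have hb22 : ⟪Y, Y⟫ = (1:ℝ) := by simpa using horth 2 2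
  have hb23 : ⟪Y, (T.J Y)⟫ = (0:ℝ) := by simpa using horth 2 3
  have hb24 : ⟪Y, Z⟫ = (0:ℝ) := by simpa using horth 2 4
  have hb25 : ⟪Y, (T.J Z)⟫ = (0:ℝ) := by simpa using horth 2 5
  have hb30 : ⟪(T.J Y), X⟫ = (0:ℝ) := by simpa using horth 3 0
  have hb31 : ⟪(T.J Y), (T.J X)⟫ = (0:ℝ) := by simpa using horth 3 1
  have hb32 : ⟪(T.J Y), Y⟫ = (0:ℝ) := by simpa using horth 3 2
  have hb33 : ⟪(T.J Y), (T.J Y)⟫ = (1:ℝ) := by simpa using horth 3 3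
  have hb34 : ⟪(T.J Y), Z⟫ = (0:ℝ) := by simpa using horth 3 4
  have hb35 : ⟪(T.J Y), (T.J Z)⟫ = (0:ℝ) := by simpa using horth 3 5
  have hb40 : ⟪Z, X⟫ = (0:ℝ) := by simpa using horth 4 0
  have hb41 : ⟪Z, (T.J X)⟫ = (0:ℝ) := by simpa using horth 4 1
  have hb42 : ⟪Z, Y⟫ = (0:ℝ) := by simpa using horth 4 2
  have hb43 : ⟪Z, (T.J Y)⟫ = (0:ℝ) := by simpa using horth 4 3
  have hb44 : ⟪Z, Z⟫ = (1:ℝ) := by simpa using horth 4 4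
  have hb45 : ⟪Z, (T.J Z)⟫ = (0:ℝ) := by simpa using horth 4 5
  have hb50 : ⟪(T.J Z), X⟫ = (0:ℝ) := by simpa using horth 5 0
  have hb51 : ⟪(T.J Z), (T.J X)⟫ = (0:ℝ) := by simpa using horth 5 1
  have hb52 : ⟪(T.J Z), Y⟫ = (0:ℝ) := by simpa using horth 5 2
  have hb53 : ⟪(T.J Z), (T.J Y)⟫ = (0:ℝ) := by simpa using horth 5 3
  have hb54 : ⟪(T.J Z), Z⟫ = (0:ℝ) := by simpa using horth 5 4
  have hb55 : ⟪(T.J Z), (T.J Z)⟫ = (1:ℝ) := by simpa using horth 5 5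
  have hON1 : Orthonormal ℝ ![X, T.J X, Y, T.J Y] :=
    on_aux T X Y hb00 hb22 hb02 hb03
  have hXY1 : (1 : ℝ) * ⟪T.R X (T.J X) Y, (T.J X)⟫
      = (1 : ℝ) * ⟪T.R Y (T.J Y) X, (T.J Y)⟫ := by
    have h0 := hxy X Y hON1
    try (simp only [R_add1 T, R_add2 T, R_add3 T, R_smul1 T, R_smul2 T, R_smul3 T, R_neg1 T, R_neg2 T, R_neg3 T, map_add, map_smul, map_neg, T.J_sq, inner_add_left, inner_add_right, real_inner_smul_left, real_inner_smul_right, inner_neg_left, inner_neg_right, smul_neg, neg_neg] at h0)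
    linear_combination h0
  have hON3 : Orthonormal ℝ ![X, T.J X, Z, T.J Z] :=
    on_aux T X Z hb00 hb44 hb04 hb05
  have hXY3 : (1 : ℝ) * ⟪T.R X (T.J X) Z, (T.J X)⟫
      = (1 : ℝ) * ⟪T.R Z (T.J Z) X, (T.J Z)⟫ := by
    have h0 := hxy X Z hON3
    try (simp only [R_add1 T, R_add2 T, R_add3 T, R_smul1 T, R_smul2 T, R_smul3 T, R_neg1 T, R_neg2 T, R_neg3 T, map_add, map_smul, map_neg, T.J_sq, inner_add_left, inner_add_right, real_inner_smul_left, real_inner_smul_right, inner_neg_left, inner_neg_right, smul_neg, neg_neg] at h0)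
    linear_combination h0
  have hON4 : Orthonormal ℝ ![X, T.J X, (T.J Z), T.J (T.J Z)] :=
    on_aux T X (T.J Z) hb00 hb55 hb05 (by simp only [T.J_sq, inner_neg_right, hb04, neg_zero])
  have hXY4 : (1 : ℝ) * ⟪T.R X (T.J X) (T.J Z), (T.J X)⟫
      = (1 : ℝ) * ⟪T.R (T.J Z) Z X, Z⟫ := by
    have h0 := hxy X (T.J Z) hON4
    try (simp only [R_add1 T, R_add2 T, R_add3 T, R_smul1 T, R_smul2 T, R_smul3 T, R_neg1 T, R_neg2 T, R_neg3 T, map_add, map_smul, map_neg, T.J_sq, inner_add_left, inner_add_right, real_inner_smul_left, real_inner_smul_right, inner_neg_left, inner_neg_right, smul_neg, neg_neg] at h0)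
    linear_combination h0
  have hON41 : Orthonormal ℝ ![((3/5 : ℝ) • Y + (4/5 : ℝ) • Z), T.J ((3/5 : ℝ) • Y + (4/5 : ℝ) • Z), X, T.J X] :=
    on_aux T ((3/5 : ℝ) • Y + (4/5 : ℝ) • Z) X
      (by simp only [inner_add_left, inner_add_right, real_inner_smul_left, real_inner_smul_right]; linear_combination ((9 : ℝ)/25) * hb22 + ((12 : ℝ)/25) * hb24 + ((12 : ℝ)/25) * hb42 + ((16 : ℝ)/25) * hb44)
      hb00
      (by simp only [inner_add_left, inner_add_right, real_inner_smul_left, real_inner_smul_right]; linear_combination ((3 : ℝ)/5) * hb20 + ((4 : ℝ)/5) * hb40)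
      (by simp only [inner_add_left, inner_add_right, real_inner_smul_left, real_inner_smul_right]; linear_combination ((3 : ℝ)/5) * hb21 + ((4 : ℝ)/5) * hb41)
  have hXY41 : ((27 : ℝ)/125) * ⟪T.R Y (T.J Y) X, (T.J Y)⟫ + ((36 : ℝ)/125) * ⟪T.R Y (T.J Y) X, (T.J Z)⟫ + ((36 : ℝ)/125) * ⟪T.R Y (T.J Z) X, (T.J Y)⟫ + ((48 : ℝ)/125) * ⟪T.R Y (T.J Z) X, (T.J Z)⟫ + ((36 : ℝ)/125) * ⟪T.R Z (T.J Y) X, (T.J Y)⟫ + ((48 : ℝ)/125) * ⟪T.R Z (T.J Y) X, (T.J Z)⟫ + ((48 : ℝ)/125) * ⟪T.R Z (T.J Z) X, (T.J Y)⟫ + ((64 : ℝ)/125) * ⟪T.R Z (T.J Z) X, (T.J Z)⟫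
      = ((3 : ℝ)/5) * ⟪T.R X (T.J X) Y, (T.J X)⟫ + ((4 : ℝ)/5) * ⟪T.R X (T.J X) Z, (T.J X)⟫ := by
    have h0 := hxy ((3/5 : ℝ) • Y + (4/5 : ℝ) • Z) X hON41
    try (simp only [R_add1 T, R_add2 T, R_add3 T, R_smul1 T, R_smul2 T, R_smul3 T, R_neg1 T, R_neg2 T, R_neg3 T, map_add, map_smul, map_neg, T.J_sq, inner_add_left, inner_add_right, real_inner_smul_left, real_inner_smul_right, inner_neg_left, inner_neg_right, smul_neg, neg_neg] at h0)
    linear_combination h0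
  have hON43 : Orthonormal ℝ ![((4/5 : ℝ) • Y + (3/5 : ℝ) • Z), T.J ((4/5 : ℝ) • Y + (3/5 : ℝ) • Z), X, T.J X] :=
    on_aux T ((4/5 : ℝ) • Y + (3/5 : ℝ) • Z) X
      (by simp only [inner_add_left, inner_add_right, real_inner_smul_left, real_inner_smul_right]; linear_combination ((16 : ℝ)/25) * hb22 + ((12 : ℝ)/25) * hb24 + ((12 : ℝ)/25) * hb42 + ((9 : ℝ)/25) * hb44)
      hb00
      (by simp only [inner_add_left, inner_add_right, real_inner_smul_left, real_inner_smul_right]; linear_combination ((4 : ℝ)/5) * hb20 + ((3 : ℝ)/5) * hb40)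
      (by simp only [inner_add_left, inner_add_right, real_inner_smul_left, real_inner_smul_right]; linear_combination ((4 : ℝ)/5) * hb21 + ((3 : ℝ)/5) * hb41)
  have hXY43 : ((64 : ℝ)/125) * ⟪T.R Y (T.J Y) X, (T.J Y)⟫ + ((48 : ℝ)/125) * ⟪T.R Y (T.J Y) X, (T.J Z)⟫ + ((48 : ℝ)/125) * ⟪T.R Y (T.J Z) X, (T.J Y)⟫ + ((36 : ℝ)/125) * ⟪T.R Y (T.J Z) X, (T.J Z)⟫ + ((48 : ℝ)/125) * ⟪T.R Z (T.J Y) X, (T.J Y)⟫ + ((36 : ℝ)/125) * ⟪T.R Z (T.J Y) X, (T.J Z)⟫ + ((36 : ℝ)/125) * ⟪T.R Z (T.J Z) X, (T.J Y)⟫ + ((27 : ℝ)/125) * ⟪T.R Z (T.J Z) X, (T.J Z)⟫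
      = ((4 : ℝ)/5) * ⟪T.R X (T.J X) Y, (T.J X)⟫ + ((3 : ℝ)/5) * ⟪T.R X (T.J X) Z, (T.J X)⟫ := by
    have h0 := hxy ((4/5 : ℝ) • Y + (3/5 : ℝ) • Z) X hON43
    try (simp only [R_add1 T, R_add2 T, R_add3 T, R_smul1 T, R_smul2 T, R_smul3 T, R_neg1 T, R_neg2 T, R_neg3 T, map_add, map_smul, map_neg, T.J_sq, inner_add_left, inner_add_right, real_inner_smul_left, real_inner_smul_right, inner_neg_left, inner_neg_right, smul_neg, neg_neg] at h0)
    linear_combination h0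
  have hON57 : Orthonormal ℝ ![((3/5 : ℝ) • Y + (4/5 : ℝ) • (T.J Z)), T.J ((3/5 : ℝ) • Y + (4/5 : ℝ) • (T.J Z)), X, T.J X] :=
    on_aux T ((3/5 : ℝ) • Y + (4/5 : ℝ) • (T.J Z)) X
      (by simp only [inner_add_left, inner_add_right, real_inner_smul_left, real_inner_smul_right]; linear_combination ((9 : ℝ)/25) * hb22 + ((12 : ℝ)/25) * hb25 + ((12 : ℝ)/25) * hb52 + ((16 : ℝ)/25) * hb55)
      hb00
      (by simp only [inner_add_left, inner_add_right, real_inner_smul_left, real_inner_smul_right]; linear_combination ((3 : ℝ)/5) * hb20 + ((4 : ℝ)/5) * hb50)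
      (by simp only [inner_add_left, inner_add_right, real_inner_smul_left, real_inner_smul_right]; linear_combination ((3 : ℝ)/5) * hb21 + ((4 : ℝ)/5) * hb51)
  have hXY57 : ((27 : ℝ)/125) * ⟪T.R Y (T.J Y) X, (T.J Y)⟫ + ((-36 : ℝ)/125) * ⟪T.R Y (T.J Y) X, Z⟫ + ((-36 : ℝ)/125) * ⟪T.R Y Z X, (T.J Y)⟫ + ((48 : ℝ)/125) * ⟪T.R Y Z X, Z⟫ + ((36 : ℝ)/125) * ⟪T.R (T.J Z) (T.J Y) X, (T.J Y)⟫ + ((-48 : ℝ)/125) * ⟪T.R (T.J Z) (T.J Y) X, Z⟫ + ((-48 : ℝ)/125) * ⟪T.R (T.J Z) Z X, (T.J Y)⟫ + ((64 : ℝ)/125) * ⟪T.R (T.J Z) Z X, Z⟫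
      = ((3 : ℝ)/5) * ⟪T.R X (T.J X) Y, (T.J X)⟫ + ((4 : ℝ)/5) * ⟪T.R X (T.J X) (T.J Z), (T.J X)⟫ := by
    have h0 := hxy ((3/5 : ℝ) • Y + (4/5 : ℝ) • (T.J Z)) X hON57
    try (simp only [R_add1 T, R_add2 T, R_add3 T, R_smul1 T, R_smul2 T, R_smul3 T, R_neg1 T, R_neg2 T, R_neg3 T, map_add, map_smul, map_neg, T.J_sq, inner_add_left, inner_add_right, real_inner_smul_left, real_inner_smul_right, inner_neg_left, inner_neg_right, smul_neg, neg_neg] at h0)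
    linear_combination h0
  have hON59 : Orthonormal ℝ ![((4/5 : ℝ) • Y + (3/5 : ℝ) • (T.J Z)), T.J ((4/5 : ℝ) • Y + (3/5 : ℝ) • (T.J Z)), X, T.J X] :=
    on_aux T ((4/5 : ℝ) • Y + (3/5 : ℝ) • (T.J Z)) X
      (by simp only [inner_add_left, inner_add_right, real_inner_smul_left, real_inner_smul_right]; linear_combination ((16 : ℝ)/25) * hb22 + ((12 : ℝ)/25) * hb25 + ((12 : ℝ)/25) * hb52 + ((9 : ℝ)/25) * hb55)
      hb00
      (by simp only [inner_add_left, inner_add_right, real_inner_smul_left, real_inner_smul_right]; linear_combination ((4 : ℝ)/5) * hb20 + ((3 : ℝ)/5) * hb50)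
      (by simp only [inner_add_left, inner_add_right, real_inner_smul_left, real_inner_smul_right]; linear_combination ((4 : ℝ)/5) * hb21 + ((3 : ℝ)/5) * hb51)
  have hXY59 : ((64 : ℝ)/125) * ⟪T.R Y (T.J Y) X, (T.J Y)⟫ + ((-48 : ℝ)/125) * ⟪T.R Y (T.J Y) X, Z⟫ + ((-48 : ℝ)/125) * ⟪T.R Y Z X, (T.J Y)⟫ + ((36 : ℝ)/125) * ⟪T.R Y Z X, Z⟫ + ((48 : ℝ)/125) * ⟪T.R (T.J Z) (T.J Y) X, (T.J Y)⟫ + ((-36 : ℝ)/125) * ⟪T.R (T.J Z) (T.J Y) X, Z⟫ + ((-36 : ℝ)/125) * ⟪T.R (T.J Z) Z X, (T.J Y)⟫ + ((27 : ℝ)/125) * ⟪T.R (T.J Z) Z X, Z⟫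
      = ((4 : ℝ)/5) * ⟪T.R X (T.J X) Y, (T.J X)⟫ + ((3 : ℝ)/5) * ⟪T.R X (T.J X) (T.J Z), (T.J X)⟫ := by
    have h0 := hxy ((4/5 : ℝ) • Y + (3/5 : ℝ) • (T.J Z)) X hON59
    try (simp only [R_add1 T, R_add2 T, R_add3 T, R_smul1 T, R_smul2 T, R_smul3 T, R_neg1 T, R_neg2 T, R_neg3 T, map_add, map_smul, map_neg, T.J_sq, inner_add_left, inner_add_right, real_inner_smul_left, real_inner_smul_right, inner_neg_left, inner_neg_right, smul_neg, neg_neg] at h0)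
    linear_combination h0
  refine ⟨?_, ?_, ?_⟩
  · linear_combination
      (1 : ℝ) * (hXY1) +
      ((-25 : ℝ)/24) * (hXY3) +
      ((-25 : ℝ)/24) * (hXY4) +
      ((-125 : ℝ)/42) * (hXY41) +
      ((125 : ℝ)/56) * (hXY43) +
      ((-125 : ℝ)/42) * (hXY57) +
      ((125 : ℝ)/56) * (hXY59) +
      ((-1 : ℝ)/2) * (T.antisymm₂ X Y Z Z) +
      ((1 : ℝ)/2) * (SB T X Y Z Z) +
      ((-1 : ℝ)/2) * (SJJ34 T X Y Z Z) +
      ((1 : ℝ)/2) * (SB T X Y (T.J Z) (T.J Z)) +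
      (-1 : ℝ) * (SJ3 T X (T.J Y) Z Z) +
      ((-1 : ℝ)/2) * (T.antisymm₁ X (T.J Y) Z (T.J Z)) +
      ((3 : ℝ)/2) * (T.pair_symm X (T.J Y) Z (T.J Z)) +
      ((1 : ℝ)/2) * (T.pair_symm X (T.J Y) (T.J Z) Z) +
      ((1 : ℝ)/2) * (SB T X (T.J Y) (T.J Z) Z) +
      ((-1 : ℝ)/2) * (T.antisymm₁ X Z Y Z) +
      ((-1 : ℝ)/2) * (SJJ34 T X Z Y Z) +
      ((-1 : ℝ)/2) * (T.antisymm₂ X Z (T.J Y) (T.J Z)) +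
      ((1 : ℝ)/2) * (T.pair_symm X Z (T.J Y) (T.J Z)) +
      ((1 : ℝ)/2) * (SB T X Z (T.J Y) (T.J Z)) +
      ((1 : ℝ)/2) * (T.pair_symm X Z (T.J Z) (T.J Y)) +
      ((1 : ℝ)/2) * (SJ3 T X (T.J Z) Y Z) +
      ((-1 : ℝ)/2) * (T.antisymm₁ X (T.J Z) Y (T.J Z)) +
      ((-1 : ℝ)/2) * (T.antisymm₁ X (T.J Z) (T.J Y) Z)
  · linear_combination
      (1 : ℝ) * (hXY1) +
      ((25 : ℝ)/24) * (hXY3) +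
      ((-25 : ℝ)/8) * (hXY4) +
      ((125 : ℝ)/42) * (hXY41) +
      ((-125 : ℝ)/56) * (hXY43) +
      ((-125 : ℝ)/14) * (hXY57) +
      ((375 : ℝ)/56) * (hXY59) +
      ((-1 : ℝ)/2) * (T.antisymm₂ X Y Z Z) +
      ((3 : ℝ)/2) * (SB T X Y Z Z) +
      ((1 : ℝ)/2) * (SJJ34 T X Y Z Z) +
      ((-1 : ℝ)/2) * (SB T X Y (T.J Z) (T.J Z)) +
      (-1 : ℝ) * (SJ3 T X (T.J Y) Z Z) +
      ((1 : ℝ)/2) * (T.antisymm₁ X (T.J Y) Z (T.J Z)) +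
      ((1 : ℝ)/2) * (T.pair_symm X (T.J Y) Z (T.J Z)) +
      ((3 : ℝ)/2) * (T.pair_symm X (T.J Y) (T.J Z) Z) +
      ((-1 : ℝ)/2) * (SB T X (T.J Y) (T.J Z) Z) +
      ((-3 : ℝ)/2) * (T.antisymm₁ X Z Y Z) +
      (4 : ℝ) * (T.antisymm₂ X Z Y Z) +
      ((5 : ℝ)/2) * (SJJ34 T X Z Y Z) +
      ((-3 : ℝ)/2) * (T.antisymm₂ X Z (T.J Y) (T.J Z)) +
      ((-1 : ℝ)/2) * (T.pair_symm X Z (T.J Y) (T.J Z)) +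
      ((-1 : ℝ)/2) * (SB T X Z (T.J Y) (T.J Z)) +
      (-4 : ℝ) * (T.antisymm₁ X Z Z Y) +
      ((3 : ℝ)/2) * (T.pair_symm X Z (T.J Z) (T.J Y)) +
      ((-1 : ℝ)/2) * (SJ3 T X (T.J Z) Y Z) +
      ((1 : ℝ)/2) * (T.antisymm₁ X (T.J Z) Y (T.J Z)) +
      ((1 : ℝ)/2) * (T.antisymm₁ X (T.J Z) (T.J Y) Z)
  · linear_combination
      (1 : ℝ) * (hXY1) +
      ((-25 : ℝ)/8) * (hXY3) +
      ((25 : ℝ)/24) * (hXY4) +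
      ((-125 : ℝ)/14) * (hXY41) +
      ((375 : ℝ)/56) * (hXY43) +
      ((125 : ℝ)/42) * (hXY57) +
      ((-125 : ℝ)/56) * (hXY59) +
      ((-1 : ℝ)/2) * (T.antisymm₂ X Y Z Z) +
      ((-1 : ℝ)/2) * (SB T X Y Z Z) +
      ((-3 : ℝ)/2) * (SJJ34 T X Y Z Z) +
      ((3 : ℝ)/2) * (SB T X Y (T.J Z) (T.J Z)) +
      (3 : ℝ) * (SJ3 T X (T.J Y) Z Z) +
      ((-3 : ℝ)/2) * (T.antisymm₁ X (T.J Y) Z (T.J Z)) +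
      ((-3 : ℝ)/2) * (T.pair_symm X (T.J Y) Z (T.J Z)) +
      ((-1 : ℝ)/2) * (T.pair_symm X (T.J Y) (T.J Z) Z) +
      ((-5 : ℝ)/2) * (SB T X (T.J Y) (T.J Z) Z) +
      ((1 : ℝ)/2) * (T.antisymm₁ X Z Y Z) +
      ((1 : ℝ)/2) * (SJJ34 T X Z Y Z) +
      ((1 : ℝ)/2) * (T.antisymm₂ X Z (T.J Y) (T.J Z)) +
      ((-5 : ℝ)/2) * (T.pair_symm X Z (T.J Y) (T.J Z)) +
      ((3 : ℝ)/2) * (SB T X Z (T.J Y) (T.J Z)) +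
      ((-1 : ℝ)/2) * (T.pair_symm X Z (T.J Z) (T.J Y)) +
      ((-5 : ℝ)/2) * (SJ3 T X (T.J Z) Y Z) +
      ((-3 : ℝ)/2) * (T.antisymm₁ X (T.J Z) Y (T.J Z)) +
      (4 : ℝ) * (T.antisymm₂ X (T.J Z) Y (T.J Z)) +
      ((5 : ℝ)/2) * (T.antisymm₁ X (T.J Z) (T.J Y) Z) +
      (-4 : ℝ) * (T.antisymm₁ X (T.J Z) (T.J Z) Y)
end

section
/- Let (V, J, R) be an algebraic Kähler model of real dimension 2m with m ≥ 3 satisfying the XY-condition. Then for all vectors X, Y, Z ∈ V such that X, JX, Y, JY, Z, JZ are orthonormal, one has ⟨R(Y,JZ)X,JZ⟩ = ⟨R(Y,Z)X,Z⟩. -/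
open RealInnerProductSpace Module

namespace KahlerModel
variable {V : Type*} [NormedAddCommGroup V] [InnerProductSpace ℝ V] (T : KahlerModel V)

lemma J_skew (A B : V) : ⟪T.J A, B⟫ = -⟪A, T.J B⟫ := by
  have h := T.J_isometry A (T.J B)
  rw [T.J_sq, inner_neg_right] at h
  linarith

lemma R_add1 (A B C D : V) : T.R (A + B) C D = T.R A C D + T.R B C D := (T.lin₁ C D).map_add A B
lemma R_add2 (A B C D : V) : T.R C (A + B) D = T.R C A D + T.R C B D := (T.lin₂ C D).map_add A B
lemma R_sub2 (A B C D : V) : T.R C (A - B) D = T.R C A D - T.R C B D := (T.lin₂ C D).map_sub A B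
lemma R_sub1 (A B C D : V) : T.R (A - B) C D = T.R A C D - T.R B C D := (T.lin₁ C D).map_sub A B
lemma R_smul1 (a : ℝ) (A C D : V) : T.R (a • A) C D = a • T.R A C D := (T.lin₁ C D).map_smul a A
lemma R_add3 (A B C D : V) : T.R C D (A + B) = T.R C D A + T.R C D B := (T.lin₃ C D).map_add A B
lemma R_sub3 (A B C D : V) : T.R C D (A - B) = T.R C D A - T.R C D B := (T.lin₃ C D).map_sub A B
lemma R_smul3 (a : ℝ) (A C D : V) : T.R C D (a • A) = a • T.R C D A := (T.lin₃ C D).map_smul a A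
lemma R_smul2 (a : ℝ) (A C D : V) : T.R C (a • A) D = a • T.R C A D := (T.lin₂ C D).map_smul a A

lemma r_swapJ (A B C D : V) : ⟪T.R (T.J A) B C, D⟫ = -⟪T.R A (T.J B) C, D⟫ := by
  rw [T.pair_symm, T.R_J_commute, T.J_skew, ← T.pair_symm]


lemma quad (X W : V) (hXX : ⟪X,X⟫ = 1) (hWW : ⟪W,W⟫ = 1)
    (hXW : ⟪X,W⟫ = 0) (hXJW : ⟪X, T.J W⟫ = 0)
    (hXJX : ⟪X, T.J X⟫ = 0) (hWJW : ⟪W, T.J W⟫ = 0) :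
    Orthonormal ℝ ![X, T.J X, W, T.J W] := by
  have sk := T.J_skew
  have iso := T.J_isometry
  have hWJX : ⟪W, T.J X⟫ = 0 := by rw [real_inner_comm, sk]; simp [hXJW]
  have nX : ‖X‖ = 1 := by rw [norm_eq_sqrt_real_inner, hXX, Real.sqrt_one]
  have nW : ‖W‖ = 1 := by rw [norm_eq_sqrt_real_inner, hWW, Real.sqrt_one]
  have nJX : ‖T.J X‖ = 1 := by rw [norm_eq_sqrt_real_inner, iso, hXX, Real.sqrt_one]
  have nJW : ‖T.J W‖ = 1 := by rw [norm_eq_sqrt_real_inner, iso, hWW, Real.sqrt_one]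
  rw [orthonormal_iff_ite]
  intro i j
  fin_cases i <;> fin_cases j <;>
    simp [iso, sk, hXX, hWW, hXW, hXJW, hXJX, hWJW, hWJX, real_inner_comm, nX, nW, nJX, nJW]

end KahlerModel

theorem ZZ_JZJZ_property {V : Type*} [NormedAddCommGroup V] [InnerProductSpace ℝ V] [FiniteDimensional ℝ V]
    (T : KahlerModel V) (m : ℕ) (hm : 3 ≤ m) (hdim : finrank ℝ V = 2 * m)
    (hxy : T.XYCond)
    (X Y Z : V) (h : Orthonormal ℝ ![X, T.J X, Y, T.J Y, Z, T.J Z]) :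
    ⟪T.R Y (T.J Z) X, T.J Z⟫ = ⟪T.R Y Z X, Z⟫ := by
  rw [orthonormal_iff_ite] at h
  have hXX : ⟪X, X⟫ = 1 := by simpa using h 0 0
  have hXJX : ⟪X, T.J X⟫ = 0 := by simpa using h 0 1
  have hXY : ⟪X, Y⟫ = 0 := by simpa using h 0 2
  have hXJY : ⟪X, T.J Y⟫ = 0 := by simpa using h 0 3
  have hXZ : ⟪X, Z⟫ = 0 := by simpa using h 0 4
  have hXJZ : ⟪X, T.J Z⟫ = 0 := by simpa using h 0 5
  have hYY : ⟪Y, Y⟫ = 1 := by simpa using h 2 2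
  have hYJY : ⟪Y, T.J Y⟫ = 0 := by simpa using h 2 3
  have hYZ : ⟪Y, Z⟫ = 0 := by simpa using h 2 4
  have hYJZ : ⟪Y, T.J Z⟫ = 0 := by simpa using h 2 5
  have hZJY : ⟪Z, T.J Y⟫ = 0 := by simpa using h 4 3
  have hZZ : ⟪Z, Z⟫ = 1 := by simpa using h 4 4
  have hZJZ : ⟪Z, T.J Z⟫ = 0 := by simpa using h 4 5
  have hZY : ⟪Z, Y⟫ = 0 := by rw [real_inner_comm]; exact hYZ
  have hJZY : ⟪T.J Z, Y⟫ = 0 := by rw [real_inner_comm]; exact hYJZ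
  have hJZJZ : ⟪T.J Z, T.J Z⟫ = 1 := by rw [T.J_isometry]; exact hZZ
  have hJZJY : ⟪T.J Z, T.J Y⟫ = 0 := by rw [T.J_isometry]; exact hZY
  have hJZZ : ⟪T.J Z, Z⟫ = 0 := by rw [real_inner_comm]; exact hZJZ
  set c : ℝ := (Real.sqrt 2)⁻¹ with hcdef
  have hs : Real.sqrt 2 ≠ 0 := by positivity
  have hc : c ≠ 0 := inv_ne_zero hs
  have hc2 : c ^ 2 = 1 / 2 := by
    rw [hcdef, ← one_div, div_pow, one_pow, Real.sq_sqrt (by norm_num : (2:ℝ) ≥ 0)]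

  set JY := T.J Y with hJYdef
  set JZ := T.J Z with hJZdef
  -- the four auxiliary unit vectors
  have hJ1 : T.J (c • (Y + Z)) = c • (JY + JZ) := by rw [map_smul, map_add]
  have hJ2 : T.J (c • (Y - Z)) = c • (JY - JZ) := by rw [map_smul, map_sub]
  have hJ3 : T.J (c • (Y + JZ)) = c • (JY - Z) := by
    rw [map_smul, map_add, hJZdef, T.J_sq, ← sub_eq_add_neg]
  have hJ4 : T.J (c • (Y - JZ)) = c • (JY + Z) := by
    rw [map_smul, map_sub, hJZdef, T.J_sq, sub_neg_eq_add]
  have O1 : Orthonormal ℝ ![X, T.J X, c • (Y + Z), T.J (c • (Y + Z))] := by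
    refine T.quad X _ hXX ?_ ?_ ?_ hXJX ?_
    · simp only [real_inner_smul_left, real_inner_smul_right, inner_add_left, inner_add_right,
        hYY, hZZ, hYZ, hZY]
      linear_combination 2 * hc2
    · simp [real_inner_smul_right, inner_add_right, hXY, hXZ]
    · rw [hJ1]; simp [real_inner_smul_right, inner_add_right, hXJY, hXJZ]
    · rw [hJ1]
      simp [real_inner_smul_left, real_inner_smul_right, inner_add_left, inner_add_right,
        hYJY, hYJZ, hZJY, hZJZ]
  have O2 : Orthonormal ℝ ![X, T.J X, c • (Y - Z), T.J (c • (Y - Z))] := by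
    refine T.quad X _ hXX ?_ ?_ ?_ hXJX ?_
    · simp only [real_inner_smul_left, real_inner_smul_right, inner_sub_left, inner_sub_right,
        hYY, hZZ, hYZ, hZY]
      linear_combination 2 * hc2
    · simp [real_inner_smul_right, inner_sub_right, hXY, hXZ]
    · rw [hJ2]; simp [real_inner_smul_right, inner_sub_right, hXJY, hXJZ]
    · rw [hJ2]
      simp [real_inner_smul_left, real_inner_smul_right, inner_sub_left, inner_sub_right,
        hYJY, hYJZ, hZJY, hZJZ]
  have O3 : Orthonormal ℝ ![X, T.J X, c • (Y + JZ), T.J (c • (Y + JZ))] := by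
    refine T.quad X _ hXX ?_ ?_ ?_ hXJX ?_
    · simp only [real_inner_smul_left, real_inner_smul_right, inner_add_left, inner_add_right,
        hYY, hJZJZ, hYJZ, hJZY]
      linear_combination 2 * hc2
    · simp [real_inner_smul_right, inner_add_right, hXY, hXJZ]
    · rw [hJ3]; simp [real_inner_smul_right, inner_sub_right, hXJY, hXZ]
    · rw [hJ3]
      simp [real_inner_smul_left, real_inner_smul_right, inner_add_left, inner_sub_right,
        hYJY, hYZ, hJZJY, hJZZ]
  have O4 : Orthonormal ℝ ![X, T.J X, c • (Y - JZ), T.J (c • (Y - JZ))] := by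
    refine T.quad X _ hXX ?_ ?_ ?_ hXJX ?_
    · simp only [real_inner_smul_left, real_inner_smul_right, inner_sub_left, inner_sub_right,
        hYY, hJZJZ, hYJZ, hJZY]
      linear_combination 2 * hc2
    · simp [real_inner_smul_right, inner_sub_right, hXY, hXJZ]
    · rw [hJ4]; simp [real_inner_smul_right, inner_add_right, hXJY, hXZ]
    · rw [hJ4]
      simp [real_inner_smul_left, real_inner_smul_right, inner_sub_left, inner_add_right,
        hYJY, hYZ, hJZJY, hJZZ]
  have E1 := hxy X _ O1
  have E2 := hxy X _ O2
  have E3 := hxy X _ O3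
  have E4 := hxy X _ O4
  rw [hJ1] at E1
  rw [hJ2] at E2
  rw [hJ3] at E3
  rw [hJ4] at E4
  simp only [T.R_add1, T.R_add2, T.R_add3, T.R_sub1, T.R_sub2, T.R_sub3, T.R_smul1, T.R_smul2, T.R_smul3,
    inner_add_left, inner_add_right, inner_sub_left, inner_sub_right,
    real_inner_smul_left, real_inner_smul_right, smul_add, smul_sub] at E1 E2 E3 E4
  have hkey : ⟪T.R Y JY X, JY⟫ + ⟪T.R Y JZ X, JZ⟫ + ⟪T.R Z JY X, JZ⟫ + ⟪T.R Z JZ X, JY⟫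
      = ⟪T.R Y JY X, JY⟫ - ⟪T.R JZ Z X, JY⟫ - ⟪T.R JZ JY X, Z⟫ + ⟪T.R Y Z X, Z⟫ := by
    have h3 : c ^ 3 ≠ 0 := pow_ne_zero 3 hc
    apply mul_left_cancel₀ h3
    linear_combination (E3 + E4 - E1 - E2) / 2
  have n1 : ⟪T.R Z JY X, JZ⟫ = ⟪T.R Y JZ X, JZ⟫ := by
    rw [T.antisymm₁ Z JY X JZ, hJYdef, T.r_swapJ Y Z X JZ]
    ring
  have n2 : ⟪T.R JZ Z X, JY⟫ = -⟪T.R Z JZ X, JY⟫ := T.antisymm₁ JZ Z X JY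
  have n3 : ⟪T.R JZ JY X, Z⟫ = -⟪T.R Y Z X, Z⟫ := by
    rw [hJZdef, hJYdef, T.R_J_invariant, T.antisymm₁ Z Y X Z]
  linarith [hkey, n1, n2, n3]
end

section
/- Let (V, J, R) be an algebraic Kähler model of real dimension 2m with m ≥ 2, and let 2 ≤ r ≤ m. Suppose every r-dimensional totally real subspace W of V is special for R. Then ⟨R(X,Y)X,JY⟩ = 0 for all vectors X, Y ∈ V such that X, JX, Y, JY are orthonormal; consequently R satisfies the XY-condition ⟨R(X,JX)Y,JX⟩ = ⟨R(Y,JY)X,JY⟩ for all such X, Y. -/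
open RealInnerProductSpace Module

/-- A subspace `W` is totally real (antiholomorphic) if `J W` is orthogonal to `W`. -/
def KahlerModel.IsTotallyReal {V : Type*} [NormedAddCommGroup V] [InnerProductSpace ℝ V]
    (T : KahlerModel V) (W : Submodule ℝ V) : Prop :=
  ∀ v ∈ W, ∀ u ∈ W, ⟪T.J v, u⟫ = 0



set_option linter.unusedSectionVars false

namespace xyAux

variable {V : Type*} [NormedAddCommGroup V] [InnerProductSpace ℝ V] (T : KahlerModel V)

lemma ext_zero {v : V} (h : ∀ w : V, ⟪v, w⟫ = 0) : v = 0 := by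
  have := h v
  exact inner_self_eq_zero.mp this

lemma R_swap (x y z : V) : T.R y x z = - T.R x y z := by
  have h : ∀ w : V, ⟪T.R y x z + T.R x y z, w⟫ = 0 := by
    intro w
    rw [inner_add_left]
    have := T.antisymm₁ x y z w
    linarith
  have h0 := ext_zero h
  linear_combination (norm := module) h0

lemma R_diag (x z : V) : T.R x x z = 0 := by
  have h := R_swap T x x z
  have h2 : (2:ℝ) • T.R x x z = 0 := by
    rw [two_smul]; nth_rewrite 1 [h]; simp
  have := smul_eq_zero.mp h2
  simpa using this

lemma inner_R_self_right (x y z : V) : ⟪T.R x y z, z⟫ = 0 := by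
  have := T.antisymm₂ x y z z; linarith

lemma R_add1 (x x' y z : V) : T.R (x + x') y z = T.R x y z + T.R x' y z :=
  (T.lin₁ y z).map_add x x'

lemma R_smul1 (c : ℝ) (x y z : V) : T.R (c • x) y z = c • T.R x y z :=
  (T.lin₁ y z).map_smul c x

lemma R_add2 (x y y' z : V) : T.R x (y + y') z = T.R x y z + T.R x y' z :=
  (T.lin₂ x z).map_add y y'

lemma R_smul2 (c : ℝ) (x y z : V) : T.R x (c • y) z = c • T.R x y z :=
  (T.lin₂ x z).map_smul c y

lemma R_add3 (x y z z' : V) : T.R x y (z + z') = T.R x y z + T.R x y z' :=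
  (T.lin₃ x y).map_add z z'

lemma R_smul3 (c : ℝ) (x y z : V) : T.R x y (c • z) = c • T.R x y z :=
  (T.lin₃ x y).map_smul c z

lemma R_neg2 (x y z : V) : T.R x (-y) z = - T.R x y z := by
  have := R_smul2 T (-1 : ℝ) x y z; simpa using this

lemma R_sub2 (x y y' z : V) : T.R x (y - y') z = T.R x y z - T.R x y' z := by
  rw [sub_eq_add_neg, R_add2, R_neg2, sub_eq_add_neg]

lemma J_inner_left (x y : V) : ⟪T.J x, y⟫ = -⟪x, T.J y⟫ := by
  have h := T.J_isometry x (T.J y)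
  rw [T.J_sq, inner_neg_right] at h
  linarith

lemma inner_J_self (x : V) : ⟪x, T.J x⟫ = 0 := by
  have h := J_inner_left T x x
  have hc := real_inner_comm x (T.J x)
  linarith

lemma norm_one_of_inner {x : V} (h : ⟪x, x⟫ = 1) : ‖x‖ = 1 := by
  rw [real_inner_self_eq_norm_mul_norm] at h
  rcases mul_self_eq_one_iff.mp h with h1 | h1
  · exact h1
  · nlinarith [norm_nonneg x]

lemma inner_one_of_norm {x : V} (h : ‖x‖ = 1) : ⟪x, x⟫ = 1 := by
  rw [real_inner_self_eq_norm_mul_norm, h]; norm_num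

lemma norm_J (x : V) : ‖T.J x‖ = ‖x‖ := by
  have h : ⟪T.J x, T.J x⟫ = ⟪x, x⟫ := T.J_isometry x x
  rw [real_inner_self_eq_norm_mul_norm, real_inner_self_eq_norm_mul_norm] at h
  nlinarith [norm_nonneg x, norm_nonneg (T.J x)]

lemma flip (a b : V) :
    ⟪T.R (T.J a) b (T.J a), T.J b⟫ = -⟪T.R a b a, T.J b⟫ := by
  have hb : b = -(T.J (T.J b)) := by rw [T.J_sq]; simp
  have h1 : T.R (T.J a) b (T.J a) = - T.R a (T.J b) (T.J a) := by
    nth_rewrite 1 [hb]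
    rw [R_neg2, T.R_J_invariant]
  rw [h1, inner_neg_left, T.R_J_commute, T.J_isometry]
  have := T.pair_symm a (T.J b) a b
  have h2 := T.pair_symm a b a (T.J b)
  linarith [T.pair_symm a (T.J b) a b]

/-- Build the orthonormal quadruple from basic facts. -/
lemma quad_mk {X Y : V} (hX : ‖X‖ = 1) (hY : ‖Y‖ = 1)
    (h1 : ⟪X, Y⟫ = 0) (h2 : ⟪X, T.J Y⟫ = 0) :
    Orthonormal ℝ ![X, T.J X, Y, T.J Y] := by
  have hXX := inner_one_of_norm hX
  have hYY := inner_one_of_norm hY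
  have hJXJX : ⟪T.J X, T.J X⟫ = 1 := by rw [T.J_isometry]; exact hXX
  have hJYJY : ⟪T.J Y, T.J Y⟫ = 1 := by rw [T.J_isometry]; exact hYY
  have hXJX := inner_J_self T X
  have hYJY := inner_J_self T Y
  have hJXY : ⟪T.J X, Y⟫ = 0 := by rw [J_inner_left]; rw [h2]; ring
  have hJXJY : ⟪T.J X, T.J Y⟫ = 0 := by rw [T.J_isometry]; exact h1
  rw [orthonormal_iff_ite]
  intro i j
  fin_cases i <;> fin_cases j <;>
    simp_all [real_inner_comm X Y, real_inner_comm X (T.J X), real_inner_comm X (T.J Y),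
      real_inner_comm (T.J X) Y, real_inner_comm (T.J X) (T.J Y), real_inner_comm Y (T.J Y)]

/-- Extract the basic facts from the orthonormal quadruple. -/
lemma quad_facts {X Y : V} (h : Orthonormal ℝ ![X, T.J X, Y, T.J Y]) :
    ‖X‖ = 1 ∧ ‖Y‖ = 1 ∧ ⟪X, Y⟫ = 0 ∧ ⟪X, T.J Y⟫ = 0 := by
  refine ⟨?_, ?_, ?_, ?_⟩
  · have := h.1 0; simpa using this
  · have := h.1 2; simpa using this
  · have := h.2 (show (0 : Fin 4) ≠ 2 by decide); simpa using this
  · have := h.2 (show (0 : Fin 4) ≠ 3 by decide); simpa using this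

lemma orthonormal_cons {n : ℕ} {x : V} {f : Fin n → V} (hx : ‖x‖ = 1)
    (hxf : ∀ i, ⟪x, f i⟫ = 0) (hf : Orthonormal ℝ f) :
    Orthonormal ℝ (Fin.cons x f : Fin (n + 1) → V) := by
  rw [orthonormal_iff_ite] at hf ⊢
  intro i j
  induction i using Fin.cases with
  | zero =>
    induction j using Fin.cases with
    | zero => simpa using inner_one_of_norm hx
    | succ j => simpa [Fin.succ_ne_zero, (Fin.succ_ne_zero j).symm] using hxf j
  | succ i =>
    induction j using Fin.cases with
    | zero =>
      simp only [Fin.cons_succ, Fin.cons_zero]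
      rw [if_neg (Fin.succ_ne_zero i), real_inner_comm]
      exact hxf i
    | succ j => simpa [Fin.succ_inj] using hf i j

end xyAux

namespace xyAux

variable {V : Type*} [NormedAddCommGroup V] [InnerProductSpace ℝ V] (T : KahlerModel V)

lemma inner_right_zero_of_span {n : ℕ} {v : Fin n → V} {η : V}
    (hη : ∀ i, ⟪v i, η⟫ = 0) :
    ∀ x ∈ Submodule.span ℝ (Set.range v), ⟪x, η⟫ = 0 := by
  intro x hx
  induction hx using Submodule.span_induction with
  | mem x hx => obtain ⟨i, rfl⟩ := hx; exact hη i
  | zero => simp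
  | add x y hx hy ihx ihy => rw [inner_add_left, ihx, ihy]; ring
  | smul c x hx ih => rw [real_inner_smul_left, ih]; ring

lemma mem_orthogonal_span_range_iff {n : ℕ} (v : Fin n → V) (x : V) :
    x ∈ (Submodule.span ℝ (Set.range v))ᗮ ↔ ∀ i, ⟪v i, x⟫ = 0 := by
  constructor
  · intro h i
    exact h (v i) (Submodule.subset_span ⟨i, rfl⟩)
  · intro h u hu
    exact inner_right_zero_of_span h u hu

lemma span_totallyReal {n : ℕ} (v : Fin n → V)
    (htr : ∀ i j, ⟪T.J (v i), v j⟫ = 0) :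
    T.IsTotallyReal (Submodule.span ℝ (Set.range v)) := by
  intro a ha
  induction ha using Submodule.span_induction with
  | mem a ha =>
    obtain ⟨i, rfl⟩ := ha
    intro b hb
    induction hb using Submodule.span_induction with
    | mem b hb => obtain ⟨j, rfl⟩ := hb; exact htr i j
    | zero => simp
    | add x y hx hy ihx ihy => rw [inner_add_right, ihx, ihy]; ring
    | smul c x hx ih => rw [real_inner_smul_right, ih]; ring
  | zero => intro b hb; simp
  | add x y hx hy ihx ihy =>
    intro b hb
    rw [map_add, inner_add_left, ihx b hb, ihy b hb]; ring
  | smul c x hx ih =>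
    intro b hb
    rw [map_smul, real_inner_smul_left, ih b hb]; ring

lemma special_sum {n : ℕ} {v : Fin n → V}
    (hon : Orthonormal ℝ v)
    (hsp : T.toCurvatureTensor.IsSpecial (Submodule.span ℝ (Set.range v)))
    (w : V) (hw : w ∈ Submodule.span ℝ (Set.range v))
    (η : V) (hη : ∀ i, ⟪v i, η⟫ = 0) :
    ∑ i, ⟪T.R (v i) w (v i), η⟫ = 0 := by
  set W := Submodule.span ℝ (Set.range v) with hW
  have hli := hon.linearIndependent
  have hfr : finrank ℝ W = n := by
    rw [hW, finrank_span_eq_card hli, Fintype.card_fin]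
  let b : Basis (Fin n) ℝ W := Basis.span hli
  have hob : Orthonormal ℝ b := by
    rw [orthonormal_iff_ite]
    intro i j
    have hc : (inner ℝ (b i) (b j) : ℝ) = ⟪((b i : W) : V), ((b j : W) : V)⟫ := rfl
    rw [hc, Basis.span_apply, Basis.span_apply]
    exact orthonormal_iff_ite.mp hon i j
  let ob := (b.toOrthonormalBasis hob).reindex (finCongr hfr.symm)
  have hmem := hsp ob w hw
  have hcoe : ∀ i, ((ob i : W) : V) = v (finCongr hfr i) := by
    intro i
    simp only [ob, b, OrthonormalBasis.coe_reindex, Function.comp_apply,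
      Basis.coe_toOrthonormalBasis]
    exact congrArg Subtype.val (Basis.span_apply hli _)
  have h0 : ⟪(∑ i, T.R ((ob i : W) : V) w ((ob i : W) : V) : V), η⟫ = 0 :=
    inner_right_zero_of_span hη _ hmem
  rw [sum_inner] at h0
  have h1 : ∑ i : Fin (finrank ℝ W), ⟪T.R ((ob i : W) : V) w ((ob i : W) : V), η⟫
      = ∑ i : Fin (finrank ℝ W), ⟪T.R (v (finCongr hfr i)) w (v (finCongr hfr i)), η⟫ := by
    refine Finset.sum_congr rfl fun i _ => ?_
    rw [hcoe i]
  rw [h1] at h0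
  rw [← h0]
  exact (Fintype.sum_equiv (finCongr hfr) _ _ (fun i => rfl)).symm

end xyAux

namespace xyAux

variable {V : Type*} [NormedAddCommGroup V] [InnerProductSpace ℝ V] [FiniteDimensional ℝ V]
  (T : KahlerModel V)

lemma finrank_inf_orthogonal_ge (U A : Submodule ℝ V) :
    finrank ℝ U ≤ finrank ℝ (U ⊓ Aᗮ : Submodule ℝ V) + finrank ℝ A := by
  have h1 := Submodule.finrank_sup_add_finrank_inf_eq U Aᗮ
  have h2 := Submodule.finrank_add_finrank_orthogonal A
  have h3 := Submodule.finrank_le (U ⊔ Aᗮ)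
  omega

lemma exists_tr_family (n : ℕ) (U : Submodule ℝ V)
    (hJ : ∀ x ∈ U, T.J x ∈ U) (hd : 2 * n ≤ finrank ℝ U) :
    ∃ u : Fin n → V, (∀ i, u i ∈ U) ∧ Orthonormal ℝ u ∧
      (∀ i j, ⟪T.J (u i), u j⟫ = 0) := by
  induction n generalizing U with
  | zero =>
    refine ⟨Fin.elim0, fun i => i.elim0, ?_, fun i => i.elim0⟩
    rw [orthonormal_iff_ite]; exact fun i => i.elim0
  | succ n ih =>
    have hUbot : U ≠ ⊥ := by
      intro hb
      rw [hb, finrank_bot] at hd; omega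
    obtain ⟨x, hxU, hx0⟩ := Submodule.exists_mem_ne_zero_of_ne_bot hUbot
    set e : V := ‖x‖⁻¹ • x with he
    have he1 : ‖e‖ = 1 := norm_smul_inv_norm hx0
    have heU : e ∈ U := U.smul_mem _ hxU
    have hee : ⟪e, e⟫ = 1 := inner_one_of_norm he1
    set U' : Submodule ℝ V := (U ⊓ (Submodule.span ℝ {e})ᗮ) ⊓ (Submodule.span ℝ {T.J e})ᗮ
      with hU'
    have hmemU' : ∀ y : V, y ∈ U' ↔ (y ∈ U ∧ ⟪e, y⟫ = 0 ∧ ⟪T.J e, y⟫ = 0) := by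
      intro y
      rw [hU', Submodule.mem_inf, Submodule.mem_inf,
        Submodule.mem_orthogonal_singleton_iff_inner_right,
        Submodule.mem_orthogonal_singleton_iff_inner_right, and_assoc]
    have hJU' : ∀ y ∈ U', T.J y ∈ U' := by
      intro y hy
      rw [hmemU'] at hy ⊢
      obtain ⟨h1, h2, h3⟩ := hy
      refine ⟨hJ y h1, ?_, ?_⟩
      · have := J_inner_left T e y
        have h4 := J_inner_left T e (T.J y)
        rw [T.J_sq, inner_neg_right] at h4
        linarith
      · rw [T.J_isometry]; exact h2
    have hd' : 2 * n ≤ finrank ℝ U' := by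
      have g1 := finrank_inf_orthogonal_ge (U ⊓ (Submodule.span ℝ {e})ᗮ)
        (Submodule.span ℝ {T.J e})
      have g2 := finrank_inf_orthogonal_ge U (Submodule.span ℝ {e})
      have ge1 : finrank ℝ (Submodule.span ℝ {e}) = 1 := finrank_span_singleton
        (by intro h; rw [h] at he1; simp at he1)
      have hJe0 : T.J e ≠ 0 := by
        intro h
        have := norm_J T e
        rw [h, he1] at this; simp at this
      have ge2 : finrank ℝ (Submodule.span ℝ {T.J e}) = 1 := finrank_span_singleton hJe0
      rw [← hU'] at g1
      omega
    obtain ⟨u', hu'U, hu'on, hu'tr⟩ := ih U' hJU' hd'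
    have hu'facts : ∀ i, u' i ∈ U ∧ ⟪e, u' i⟫ = 0 ∧ ⟪T.J e, u' i⟫ = 0 := by
      intro i; exact (hmemU' (u' i)).mp (hu'U i)
    refine ⟨Fin.cons e u', ?_, ?_, ?_⟩
    · intro i
      induction i using Fin.cases with
      | zero => simpa using heU
      | succ i => simpa using (hu'facts i).1
    · exact orthonormal_cons he1 (fun i => (hu'facts i).2.1) hu'on
    · intro i j
      induction i using Fin.cases with
      | zero =>
        induction j using Fin.cases with
        | zero =>
          simp only [Fin.cons_zero]
          rw [real_inner_comm]
          exact inner_J_self T e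
        | succ j => simpa using (hu'facts j).2.2
      | succ i =>
        induction j using Fin.cases with
        | zero =>
          simp only [Fin.cons_succ, Fin.cons_zero]
          rw [J_inner_left]
          have := real_inner_comm (T.J e) (u' i)
          have h2 := (hu'facts i).2.2
          linarith
        | succ j => simpa using hu'tr i j

end xyAux

namespace xyAux

variable {V : Type*} [NormedAddCommGroup V] [InnerProductSpace ℝ V] [FiniteDimensional ℝ V]
  (T : KahlerModel V)

lemma inner_J_self' (x : V) : ⟪T.J x, x⟫ = 0 := by
  rw [real_inner_comm]; exact inner_J_self T x

lemma part1 (m k : ℕ) (hm : 2 ≤ m) (hdim : finrank ℝ V = 2 * m) (hkm : k + 2 ≤ m)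
    (hspec : ∀ W : Submodule ℝ V, finrank ℝ W = k + 2 → T.IsTotallyReal W →
      T.toCurvatureTensor.IsSpecial W)
    (X Y : V) (h : Orthonormal ℝ ![X, T.J X, Y, T.J Y]) :
    ⟪T.R X Y X, T.J Y⟫ = 0 := by
  obtain ⟨hX, hY, hXY, hXJY⟩ := quad_facts T h
  have hJXY : ⟪T.J X, Y⟫ = 0 := by rw [J_inner_left, hXJY]; ring
  set q : Fin 4 → V := ![X, T.J X, Y, T.J Y] with hq
  set U : Submodule ℝ V := (Submodule.span ℝ (Set.range q))ᗮ with hU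
  have hUX : ∀ x ∈ U, ⟪X, x⟫ = 0 ∧ ⟪T.J X, x⟫ = 0 ∧ ⟪Y, x⟫ = 0 ∧ ⟪T.J Y, x⟫ = 0 := by
    intro x hx
    rw [hU, mem_orthogonal_span_range_iff] at hx
    refine ⟨?_, ?_, ?_, ?_⟩
    · have := hx 0; simpa [hq] using this
    · have := hx 1; simpa [hq] using this
    · have := hx 2; simpa [hq] using this
    · have := hx 3; simpa [hq] using this
  have hJU : ∀ x ∈ U, T.J x ∈ U := by
    intro x hx
    obtain ⟨h1, h2, h3, h4⟩ := hUX x hx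
    rw [hU, mem_orthogonal_span_range_iff]
    intro i
    fin_cases i
    · show ⟪X, T.J x⟫ = 0
      have := J_inner_left T X x; linarith
    · show ⟪T.J X, T.J x⟫ = 0
      rw [T.J_isometry]; exact h1
    · show ⟪Y, T.J x⟫ = 0
      have := J_inner_left T Y x; linarith
    · show ⟪T.J Y, T.J x⟫ = 0
      rw [T.J_isometry]; exact h3
  have hdU : 2 * k ≤ finrank ℝ U := by
    have hQ4 : finrank ℝ (Submodule.span ℝ (Set.range q)) = 4 := by
      rw [finrank_span_eq_card h.linearIndependent, Fintype.card_fin]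
    have hQU := Submodule.finrank_add_finrank_orthogonal (Submodule.span ℝ (Set.range q))
    rw [hQ4] at hQU
    rw [hU]
    omega
  obtain ⟨u, huU, huon, hutr⟩ := exists_tr_family T k U hJU hdU
  -- The key computation, valid for any admissible family g.
  have key : ∀ g : Fin k → V, (∀ i, g i ∈ U) → Orthonormal ℝ g →
      (∀ i j, ⟪T.J (g i), g j⟫ = 0) →
      ⟪T.R X Y X, T.J Y⟫ + ∑ i, ⟪T.R (g i) Y (g i), T.J Y⟫ = 0 := by
    intro g hgU hgon hgtr
    have hg4 := fun i => hUX (g i) (hgU i)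
    set vf : Fin (k + 2) → V := Fin.cons X (Fin.cons Y g) with hvf
    have honv : Orthonormal ℝ vf := by
      refine orthonormal_cons hX ?_ (orthonormal_cons hY (fun i => (hg4 i).2.2.1) hgon)
      intro i
      induction i using Fin.cases with
      | zero => simpa using hXY
      | succ i => simpa using (hg4 i).1
    have htrv : ∀ i j, ⟪T.J (vf i), vf j⟫ = 0 := by
      intro i j
      induction i using Fin.cases with
      | zero =>
        induction j using Fin.cases with
        | zero => simpa [hvf] using inner_J_self' T X
        | succ j =>
          induction j using Fin.cases with
          | zero => simpa [hvf] using hJXY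
          | succ j => simpa [hvf] using (hg4 j).2.1
      | succ i =>
        induction i using Fin.cases with
        | zero =>
          induction j using Fin.cases with
          | zero =>
            simp only [hvf, Fin.cons_succ, Fin.cons_zero]
            rw [real_inner_comm]
            exact hXJY
          | succ j =>
            induction j using Fin.cases with
            | zero => simpa [hvf] using inner_J_self' T Y
            | succ j => simpa [hvf] using (hg4 j).2.2.2
        | succ i =>
          induction j using Fin.cases with
          | zero =>
            simp only [hvf, Fin.cons_succ, Fin.cons_zero]
            rw [J_inner_left]
            have := real_inner_comm (T.J X) (g i)
            have h2 := (hg4 i).2.1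
            linarith
          | succ j =>
            induction j using Fin.cases with
            | zero =>
              simp only [hvf, Fin.cons_succ, Fin.cons_zero]
              rw [J_inner_left]
              have := real_inner_comm (T.J Y) (g i)
              have h2 := (hg4 i).2.2.2
              linarith
            | succ j => simpa [hvf] using hgtr i j
    have hW : finrank ℝ (Submodule.span ℝ (Set.range vf)) = k + 2 := by
      rw [finrank_span_eq_card honv.linearIndependent, Fintype.card_fin]
    have hsp := hspec _ hW (span_totallyReal T vf htrv)
    have hwmem : Y ∈ Submodule.span ℝ (Set.range vf) :=
      Submodule.subset_span ⟨1, by simp [hvf]⟩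
    have hη : ∀ i, ⟪vf i, T.J Y⟫ = 0 := by
      intro i
      induction i using Fin.cases with
      | zero => simpa [hvf] using hXJY
      | succ i =>
        induction i using Fin.cases with
        | zero => simpa [hvf] using inner_J_self T Y
        | succ i =>
          simp only [hvf, Fin.cons_succ]
          have := real_inner_comm (T.J Y) (g i)
          have h2 := (hg4 i).2.2.2
          linarith
    have hsum := special_sum T honv hsp Y hwmem (T.J Y) hη
    rw [Fin.sum_univ_succ, Fin.sum_univ_succ] at hsum
    simp only [hvf, Fin.cons_zero, Fin.cons_succ] at hsum
    rw [R_diag] at hsum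
    simpa using hsum
  have E0 := key u huU huon hutr
  have tzero : ∀ i0, ⟪T.R (u i0) Y (u i0), T.J Y⟫ = 0 := by
    intro i0
    set g : Fin k → V := Function.update u i0 (T.J (u i0)) with hg
    have hbase := orthonormal_iff_ite.mp huon
    have hgU : ∀ i, g i ∈ U := by
      intro i
      by_cases hi : i = i0
      · subst hi; rw [hg, Function.update_self]; exact hJU _ (huU i)
      · rw [hg, Function.update_of_ne hi]; exact huU i
    have hgon : Orthonormal ℝ g := by
      rw [orthonormal_iff_ite]
      intro i j
      by_cases hi : i = i0 <;> by_cases hj : j = i0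
      · subst hi; subst hj
        simp only [hg, Function.update_self, T.J_isometry]
        simp [hbase, huon.1 j]
      · subst hi
        rw [hg, Function.update_self, Function.update_of_ne hj,
          if_neg (fun hh => hj hh.symm)]
        exact hutr i j
      · subst hj
        rw [hg, Function.update_self, Function.update_of_ne hi, if_neg hi, real_inner_comm]
        exact hutr j i
      · rw [hg, Function.update_of_ne hi, Function.update_of_ne hj]
        exact hbase i j
    have hgtr : ∀ i j, ⟪T.J (g i), g j⟫ = 0 := by
      intro i j
      by_cases hi : i = i0 <;> by_cases hj : j = i0
      · subst hi; subst hj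
        rw [hg, Function.update_self, T.J_sq, inner_neg_left, inner_J_self]
        ring
      · subst hi
        rw [hg, Function.update_self, Function.update_of_ne hj, T.J_sq, inner_neg_left]
        have := hbase i j
        rw [if_neg (fun hh => hj hh.symm)] at this
        rw [this]; ring
      · subst hj
        rw [hg, Function.update_self, Function.update_of_ne hi, T.J_isometry]
        have := hbase i j
        rw [if_neg hi] at this
        exact this
      · rw [hg, Function.update_of_ne hi, Function.update_of_ne hj]
        exact hutr i j
    have E1 := key g hgU hgon hgtr
    have hterm : ∀ j, ⟪T.R (g j) Y (g j), T.J Y⟫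
        = ⟪T.R (u j) Y (u j), T.J Y⟫
          - (if j = i0 then 2 * ⟪T.R (u i0) Y (u i0), T.J Y⟫ else 0) := by
      intro j
      by_cases hj : j = i0
      · subst hj
        rw [hg, Function.update_self, if_pos rfl, flip T (u j) Y]
        ring
      · rw [hg, Function.update_of_ne hj, if_neg hj]
        ring
    rw [Finset.sum_congr rfl (fun j _ => hterm j), Finset.sum_sub_distrib,
      Finset.sum_ite_eq' Finset.univ i0
        (fun _ => 2 * ⟪T.R (u i0) Y (u i0), T.J Y⟫)] at E1
    simp only [Finset.mem_univ, if_true] at E1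
    linarith
  have hsum0 : ∑ i, ⟪T.R (u i) Y (u i), T.J Y⟫ = 0 :=
    Finset.sum_eq_zero fun i _ => tzero i
  linarith

end xyAux

namespace xyAux

variable {V : Type*} [NormedAddCommGroup V] [InnerProductSpace ℝ V] (T : KahlerModel V)

set_option maxHeartbeats 1000000 in
lemma ident
    (hP : ∀ X Y : V, Orthonormal ℝ ![X, T.J X, Y, T.J Y] → ⟪T.R X Y X, T.J Y⟫ = 0)
    {X Y : V} (h : Orthonormal ℝ ![X, T.J X, Y, T.J Y]) :
    ⟪T.R X Y X, T.J X⟫ = ⟪T.R X Y Y, T.J Y⟫ := by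
  obtain ⟨hX, hY, hXY, hXJY⟩ := quad_facts T h
  have hJXY : ⟪T.J X, Y⟫ = 0 := by rw [J_inner_left, hXJY]; ring
  have hYX : ⟪Y, X⟫ = 0 := by rw [real_inner_comm]; exact hXY
  have hYJX : ⟪Y, T.J X⟫ = 0 := by rw [real_inner_comm]; exact hJXY
  have h1 : ⟪T.R X Y X, T.J Y⟫ = 0 := hP X Y h
  have h2 : ⟪T.R Y X Y, T.J X⟫ = 0 := hP Y X (quad_mk T hY hX hYX hYJX)
  have h3 : ⟪T.R X Y Y, T.J X⟫ = 0 := by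
    have hb := T.bianchi (T.J X) Y X
    have hb2 : ⟪T.R (T.J X) Y X + T.R Y X (T.J X) + T.R X (T.J X) Y, Y⟫ = 0 := by
      rw [hb]; simp
    rw [inner_add_left, inner_add_left] at hb2
    have e1 : ⟪T.R X (T.J X) Y, Y⟫ = 0 := inner_R_self_right T _ _ _
    have e2' := T.antisymm₂ Y X (T.J X) Y
    have e4 := T.pair_symm X Y Y (T.J X)
    have e5 := T.antisymm₁ Y (T.J X) X Y
    linarith
  set c : ℝ := (Real.sqrt 2)⁻¹ with hc
  have hc2 : c * c = 1 / 2 := by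
    rw [hc, ← mul_inv, Real.mul_self_sqrt (by norm_num)]
    norm_num
  have hXX := inner_one_of_norm hX
  have hYY := inner_one_of_norm hY
  have hXJX := inner_J_self T X
  have hYJY := inner_J_self T Y
  have hYJX' : ⟪Y, T.J X⟫ = 0 := hYJX
  set a : V := c • (X + Y) with ha
  set b : V := c • (X - Y) with hb
  have s1 : ⟪X + Y, X + Y⟫ = 2 := by
    rw [inner_add_left, inner_add_right, inner_add_right]; linarith
  have s2 : ⟪X - Y, X - Y⟫ = 2 := by
    rw [inner_sub_left, inner_sub_right, inner_sub_right]; linarith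
  have haa : ⟪a, a⟫ = 1 := by
    rw [ha, real_inner_smul_left, real_inner_smul_right, s1]; nlinarith
  have hbb : ⟪b, b⟫ = 1 := by
    rw [hb, real_inner_smul_left, real_inner_smul_right, s2]; nlinarith
  have hab : ⟪a, b⟫ = 0 := by
    rw [ha, hb, real_inner_smul_left, real_inner_smul_right, inner_add_left,
      inner_sub_right, inner_sub_right]
    nlinarith
  have hJb : T.J b = c • (T.J X - T.J Y) := by rw [hb, map_smul, map_sub]
  have haJb : ⟪a, T.J b⟫ = 0 := by
    rw [ha, hJb, real_inner_smul_left, real_inner_smul_right, inner_add_left,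
      inner_sub_right, inner_sub_right]
    nlinarith
  have hquad := quad_mk T (norm_one_of_inner haa) (norm_one_of_inner hbb) hab haJb
  have h5 := hP a b hquad
  have hv : ∀ z, T.R (X + Y) (X - Y) z = (-2 : ℝ) • T.R X Y z := by
    intro z
    rw [R_add1, R_sub2, R_sub2, R_diag, R_diag, R_swap T X Y z]
    module
  have expand : ⟪T.R a b a, T.J b⟫
      = (c * c) * (c * c) * ⟪T.R (X + Y) (X - Y) (X + Y), T.J (X - Y)⟫ := by
    rw [ha, hb, R_smul1, R_smul2, R_smul3, map_smul, real_inner_smul_right,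
      real_inner_smul_left, real_inner_smul_left, real_inner_smul_left]
    ring
  have hS : ⟪T.R (X + Y) (X - Y) (X + Y), T.J (X - Y)⟫
      = (-2) * (⟪T.R X Y X, T.J X⟫ - ⟪T.R X Y Y, T.J Y⟫) := by
    rw [hv (X + Y), map_sub, real_inner_smul_left, R_add3, inner_add_left,
      inner_sub_right, inner_sub_right, h1, h3]
    ring
  have hfinal : (c * c) * (c * c)
      * ((-2) * (⟪T.R X Y X, T.J X⟫ - ⟪T.R X Y Y, T.J Y⟫)) = 0 := by
    rw [← hS, ← expand]; exact h5
  rw [hc2] at hfinal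
  linarith

lemma xy_from_part1
    (hP : ∀ X Y : V, Orthonormal ℝ ![X, T.J X, Y, T.J Y] → ⟪T.R X Y X, T.J Y⟫ = 0) :
    T.XYCond := by
  intro X Y h
  obtain ⟨hX, hY, hXY, hXJY⟩ := quad_facts T h
  have s2 : ∀ z, T.R Y (T.J X) z = T.R X (T.J Y) z := by
    intro z
    calc T.R Y (T.J X) z = T.R (T.J Y) (T.J (T.J X)) z := (T.R_J_invariant _ _ _).symm
      _ = T.R (T.J Y) (-X) z := by rw [T.J_sq]
      _ = - T.R (T.J Y) X z := R_neg2 T _ _ _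
      _ = T.R X (T.J Y) z := by rw [R_swap T X (T.J Y) z]; simp
  have hJYnorm : ‖T.J Y‖ = 1 := by rw [norm_J]; exact hY
  have hXJJY : ⟪X, T.J (T.J Y)⟫ = 0 := by rw [T.J_sq, inner_neg_right, hXY]; ring
  have hquadXJY : Orthonormal ℝ ![X, T.J X, T.J Y, T.J (T.J Y)] :=
    quad_mk T hX hJYnorm hXJY hXJJY
  have hid := ident T hP hquadXJY
  have c1 : ⟪T.R X (T.J X) Y, T.J X⟫ = ⟪T.R X (T.J Y) X, T.J X⟫ := by
    rw [T.pair_symm X (T.J X) Y (T.J X), s2 X]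
  have c2 : ⟪T.R X (T.J Y) (T.J Y), T.J (T.J Y)⟫ = ⟪T.R X (T.J Y) Y, T.J Y⟫ := by
    rw [T.J_sq, inner_neg_right, T.R_J_commute, J_inner_left]
    ring
  have c3 := T.pair_symm X (T.J Y) Y (T.J Y)
  rw [c1, hid, c2, c3]

end xyAux


theorem xy_of_special_totally_real_subspaces {V : Type*} [NormedAddCommGroup V] [InnerProductSpace ℝ V] [FiniteDimensional ℝ V]
    (T : KahlerModel V) (m : ℕ) (hm : 2 ≤ m) (hdim : finrank ℝ V = 2 * m)
    (r : ℕ) (hr2 : 2 ≤ r) (hrm : r ≤ m)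
    (hspec : ∀ W : Submodule ℝ V, finrank ℝ W = r → T.IsTotallyReal W →
      T.toCurvatureTensor.IsSpecial W) :
    (∀ X Y : V, Orthonormal ℝ ![X, T.J X, Y, T.J Y] →
        ⟪T.R X Y X, T.J Y⟫ = 0) ∧ T.XYCond := by
  obtain ⟨k, rfl⟩ : ∃ k, r = k + 2 := ⟨r - 2, by omega⟩
  have hP : ∀ X Y : V, Orthonormal ℝ ![X, T.J X, Y, T.J Y] → ⟪T.R X Y X, T.J Y⟫ = 0 :=
    fun X Y h => xyAux.part1 T m k hm hdim (by omega) hspec X Y h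
  exact ⟨hP, xyAux.xy_from_part1 T hP⟩
end

section
/- Let (V, J, R) be an algebraic Kähler model of real dimension 2m with m ≥ 3. Suppose ⟨R(X,JX)Y,JX⟩ = 0 for all vectors X, Y ∈ V such that X, JX, Y, JY are orthonormal (pointwise constant holomorphic sectional curvature). Then for all vectors X, Y, Z ∈ V such that X, JX, Y, JY, Z, JZ are orthonormal, one has ⟨R(Z,X)Z,Y⟩ = 0, ⟨R(JZ,X)JZ,Y⟩ = 0, and ⟨R(Z,JX)Z,Y⟩ = 0. -/
open RealInnerProductSpace Module

section Aux

variable {V : Type*} [NormedAddCommGroup V] [InnerProductSpace ℝ V] (T : KahlerModel V)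

lemma KM_R_add₁ (a b c d : V) : T.R (a + b) c d = T.R a c d + T.R b c d :=
  (T.lin₁ c d).map_add a b

lemma KM_R_add₂ (a b c d : V) : T.R a (b + c) d = T.R a b d + T.R a c d :=
  (T.lin₂ a d).map_add b c

lemma KM_R_neg₂ (a b c : V) : T.R a (-b) c = -T.R a b c :=
  (T.lin₂ a c).map_neg b

lemma KM_R_smul₁ (r : ℝ) (a b c : V) : T.R (r • a) b c = r • T.R a b c :=
  (T.lin₁ b c).map_smul r a

lemma KM_R_smul₂ (r : ℝ) (a b c : V) : T.R a (r • b) c = r • T.R a b c :=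
  (T.lin₂ a c).map_smul r b

lemma KM_r_self₁ (a c d : V) : ⟪T.R a a c, d⟫ = 0 := by
  have := T.antisymm₁ a a c d; linarith

lemma KM_inner_J_self (a : V) : ⟪a, T.J a⟫ = 0 := by
  have h := T.J_isometry a (T.J a)
  rw [T.J_sq, inner_neg_right, real_inner_comm] at h
  linarith

lemma KM_inner_J_left (a b : V) : ⟪T.J a, b⟫ = -⟪a, T.J b⟫ := by
  have h := T.J_isometry a (T.J b)
  rw [T.J_sq, inner_neg_right] at h
  linarith

/-- `⟪R a b (J c), J d⟫ = ⟪R a b c, d⟫` -/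
lemma KM_r5 (a b c d : V) : ⟪T.R a b (T.J c), T.J d⟫ = ⟪T.R a b c, d⟫ := by
  rw [T.R_J_commute, T.J_isometry]

/-- `⟪R a b (J c), d⟫ = -⟪R a b c, J d⟫` -/
lemma KM_r5' (a b c d : V) : ⟪T.R a b (T.J c), d⟫ = -⟪T.R a b c, T.J d⟫ := by
  have h2 : ⟪T.R a b (T.J c), T.J (T.J d)⟫ = ⟪T.R a b (T.J c), -d⟫ := by rw [T.J_sq]
  rw [KM_r5, inner_neg_right] at h2
  linarith

/-- `⟪R (J a) b c, d⟫ = -⟪R a (J b) c, d⟫` -/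
lemma KM_rJ₁ (a b c d : V) : ⟪T.R (T.J a) b c, d⟫ = -⟪T.R a (T.J b) c, d⟫ := by
  have hb : T.J (-(T.J b)) = b := by rw [map_neg, T.J_sq, neg_neg]
  have h := T.R_J_invariant a (-(T.J b)) c
  rw [hb, KM_R_neg₂] at h
  rw [h, inner_neg_left]

/-- The cubic form vanishes on the orthogonal complement of `span {B, J B}`. -/
lemma KM_cube (hconst : ∀ X Y : V, Orthonormal ℝ ![X, T.J X, Y, T.J Y] →
      ⟪T.R X (T.J X) Y, T.J X⟫ = 0)
    (B A : V) (hB : ‖B‖ = 1) (h1 : ⟪A, B⟫ = 0) (h2 : ⟪A, T.J B⟫ = 0) :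
    ⟪T.R A (T.J A) B, T.J A⟫ = 0 := by
  rcases eq_or_ne A 0 with rfl | hA
  · rw [(T.lin₁ _ _).map_zero, inner_zero_left]
  · have hn : ‖A‖ ≠ 0 := norm_ne_zero_iff.mpr hA
    set c : ℝ := ‖A‖⁻¹ with hc
    have hcne : c ≠ 0 := inv_ne_zero hn
    have hA'n : ‖c • A‖ = 1 := by
      rw [norm_smul, hc, norm_inv, norm_norm, inv_mul_cancel₀ hn]
    have hJA : ⟪T.J A, B⟫ = 0 := by rw [KM_inner_J_left]; simp [h2]
    have hJAJB : ⟪T.J A, T.J B⟫ = 0 := by rw [T.J_isometry, h1]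
    have hBA : ⟪B, A⟫ = 0 := by rw [real_inner_comm, h1]
    have hBJA : ⟪B, T.J A⟫ = 0 := by rw [real_inner_comm, hJA]
    have hJBA : ⟪T.J B, A⟫ = 0 := by rw [real_inner_comm, h2]
    have hJBJA : ⟪T.J B, T.J A⟫ = 0 := by rw [real_inner_comm, hJAJB]
    have hsq : ⟪c • A, c • A⟫ = 1 := by
      rw [real_inner_self_eq_norm_sq, hA'n]; norm_num
    have hBsq : ⟪B, B⟫ = 1 := by rw [real_inner_self_eq_norm_sq, hB]; norm_num
    have hJn : ∀ v : V, ‖T.J v‖ = ‖v‖ := by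
      intro v
      have := T.J_isometry v v
      rw [real_inner_self_eq_norm_mul_norm, real_inner_self_eq_norm_mul_norm] at this
      exact (mul_self_inj (norm_nonneg _) (norm_nonneg _)).mp this
    have horth : Orthonormal ℝ ![c • A, T.J (c • A), B, T.J B] := by
      rw [orthonormal_iff_ite]
      intro i j
      fin_cases i <;> fin_cases j <;>
        simp [map_smul, inner_smul_left, inner_smul_right, KM_inner_J_self,
          KM_inner_J_left, T.J_isometry, T.J_sq, h1, h2, hJA, hJAJB, hBA, hBJA,
          hJBA, hJBJA, hBsq, real_inner_comm A (T.J A),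
          real_inner_self_eq_norm_mul_norm, hc] <;>
        field_simp <;>
        simp [norm_smul, hJn, hB, hn]
    have h0 := hconst (c • A) B horth
    simp only [map_smul, KM_R_smul₁, KM_R_smul₂, inner_smul_left, inner_smul_right,
      smul_eq_mul] at h0
    rcases mul_eq_zero.mp h0 with h' | h'
    · exact absurd h' hcne
    rcases mul_eq_zero.mp h' with h'' | h''
    · exact absurd h'' hcne
    rcases mul_eq_zero.mp h'' with h''' | h'''
    · exact absurd h''' hcne
    · exact h'''

/-- Full polarization of the cubic form. -/
lemma KM_polar (hconst : ∀ X Y : V, Orthonormal ℝ ![X, T.J X, Y, T.J Y] →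
      ⟪T.R X (T.J X) Y, T.J X⟫ = 0)
    (B A₁ A₂ A₃ : V) (hB : ‖B‖ = 1)
    (o₁ : ⟪A₁, B⟫ = 0) (o₁' : ⟪A₁, T.J B⟫ = 0)
    (o₂ : ⟪A₂, B⟫ = 0) (o₂' : ⟪A₂, T.J B⟫ = 0)
    (o₃ : ⟪A₃, B⟫ = 0) (o₃' : ⟪A₃, T.J B⟫ = 0) :
    ⟪T.R A₁ (T.J A₂) B, T.J A₃⟫ + ⟪T.R A₁ (T.J A₃) B, T.J A₂⟫ +
    ⟪T.R A₂ (T.J A₁) B, T.J A₃⟫ + ⟪T.R A₂ (T.J A₃) B, T.J A₁⟫ +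
    ⟪T.R A₃ (T.J A₁) B, T.J A₂⟫ + ⟪T.R A₃ (T.J A₂) B, T.J A₁⟫ = 0 := by
  have hg : ∀ A : V, ⟪A, B⟫ = 0 → ⟪A, T.J B⟫ = 0 →
      ⟪T.R A (T.J A) B, T.J A⟫ = 0 := fun A hx hy => KM_cube T hconst B A hB hx hy
  have e123 := hg (A₁ + A₂ + A₃) (by rw [inner_add_left, inner_add_left, o₁, o₂, o₃]; ring)
    (by rw [inner_add_left, inner_add_left, o₁', o₂', o₃']; ring)
  have e12 := hg (A₁ + A₂) (by rw [inner_add_left, o₁, o₂]; ring)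
    (by rw [inner_add_left, o₁', o₂']; ring)
  have e13 := hg (A₁ + A₃) (by rw [inner_add_left, o₁, o₃]; ring)
    (by rw [inner_add_left, o₁', o₃']; ring)
  have e23 := hg (A₂ + A₃) (by rw [inner_add_left, o₂, o₃]; ring)
    (by rw [inner_add_left, o₂', o₃']; ring)
  have e1 := hg A₁ o₁ o₁'
  have e2 := hg A₂ o₂ o₂'
  have e3 := hg A₃ o₃ o₃'
  simp only [map_add, KM_R_add₁, KM_R_add₂, inner_add_left, inner_add_right]
    at e123 e12 e13 e23
  linarith

end Aux

theorem vanishing_mixed_terms_of_constant_holomorphic {V : Type*} [NormedAddCommGroup V] [InnerProductSpace ℝ V] [FiniteDimensional ℝ V]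
    (T : KahlerModel V) (m : ℕ) (hm : 3 ≤ m) (hdim : finrank ℝ V = 2 * m)
    (hconst : ∀ X Y : V, Orthonormal ℝ ![X, T.J X, Y, T.J Y] →
      ⟪T.R X (T.J X) Y, T.J X⟫ = 0)
    (X Y Z : V) (h : Orthonormal ℝ ![X, T.J X, Y, T.J Y, Z, T.J Z]) :
    ⟪T.R Z X Z, Y⟫ = 0 ∧ ⟪T.R (T.J Z) X (T.J Z), Y⟫ = 0 ∧
    ⟪T.R Z (T.J X) Z, Y⟫ = 0 := by
  -- extract orthonormality data
  have hXn : ‖X‖ = 1 := by simpa using h.1 0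
  have hp := h.2
  have hYX : ⟪Y, X⟫ = 0 := by simpa using hp (show (2 : Fin 6) ≠ 0 by decide)
  have hYJX : ⟪Y, T.J X⟫ = 0 := by simpa using hp (show (2 : Fin 6) ≠ 1 by decide)
  have hJYX : ⟪T.J Y, X⟫ = 0 := by simpa using hp (show (3 : Fin 6) ≠ 0 by decide)
  have hJYJX : ⟪T.J Y, T.J X⟫ = 0 := by simpa using hp (show (3 : Fin 6) ≠ 1 by decide)
  have hZX : ⟪Z, X⟫ = 0 := by simpa using hp (show (4 : Fin 6) ≠ 0 by decide)
  have hZJX : ⟪Z, T.J X⟫ = 0 := by simpa using hp (show (4 : Fin 6) ≠ 1 by decide)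
  have hJZX : ⟪T.J Z, X⟫ = 0 := by simpa using hp (show (5 : Fin 6) ≠ 0 by decide)
  have hJZJX : ⟪T.J Z, T.J X⟫ = 0 := by simpa using hp (show (5 : Fin 6) ≠ 1 by decide)
  -- four polarized identities, all with base vector X
  have P1 := KM_polar T hconst X (T.J Y) Z (T.J Z) hXn hJYX hJYJX hZX hZJX hJZX hJZJX
  have P2 := KM_polar T hconst X Z Y Z hXn hZX hZJX hYX hYJX hZX hZJX
  have P3 := KM_polar T hconst X Y (T.J Z) Z hXn hYX hYJX hJZX hJZJX hZX hZJX
  have P4 := KM_polar T hconst X (T.J Y) Z Z hXn hJYX hJYJX hZX hZJX hZX hZJX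
  -- two Bianchi identities
  have B1 : ⟪T.R X (T.J Y) Z, T.J Z⟫ + ⟪T.R (T.J Y) Z X, T.J Z⟫ +
      ⟪T.R Z X (T.J Y), T.J Z⟫ = 0 := by
    have hb := congrArg (fun w => ⟪w, T.J Z⟫) (T.bianchi X (T.J Y) Z)
    simpa [inner_add_left] using hb
  have B2 : ⟪T.R X Y Z, T.J Z⟫ + ⟪T.R Y Z X, T.J Z⟫ + ⟪T.R Z X Y, T.J Z⟫ = 0 := by
    have hb := congrArg (fun w => ⟪w, T.J Z⟫) (T.bianchi X Y Z)
    simpa [inner_add_left] using hb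
  -- reduction of atoms in P1 : (A₁,A₂,A₃) = (JY, Z, JZ)
  have hA : ⟪T.R (T.J Y) (T.J Z) X, T.J (T.J Z)⟫ = -⟪T.R X Z Y, Z⟫ := by
    rw [T.J_sq, inner_neg_right, T.R_J_invariant, T.pair_symm]
  have hBr : ⟪T.R (T.J Y) (T.J (T.J Z)) X, T.J Z⟫ = ⟪T.R X (T.J Z) Y, T.J Z⟫ := by
    rw [T.J_sq, KM_R_neg₂, inner_neg_left, T.pair_symm, KM_r5' T X (T.J Z) Y Z, neg_neg]
  have hC : ⟪T.R Z (T.J (T.J Y)) X, T.J (T.J Z)⟫ = -⟪T.R X Z Y, Z⟫ := by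
    rw [T.J_sq, T.J_sq, KM_R_neg₂, inner_neg_left, inner_neg_right, neg_neg, T.pair_symm,
      T.antisymm₂]
  have hD : ⟪T.R Z (T.J (T.J Z)) X, T.J (T.J Y)⟫ = 0 := by
    rw [T.J_sq, KM_R_neg₂, inner_neg_left, KM_r_self₁ T, neg_zero]
  have hE : ⟪T.R (T.J Z) (T.J (T.J Y)) X, T.J Z⟫ = ⟪T.R X (T.J Z) Y, T.J Z⟫ := by
    rw [T.J_sq, KM_R_neg₂, inner_neg_left, T.pair_symm, T.antisymm₂, neg_neg]
  have hF : ⟪T.R (T.J Z) (T.J Z) X, T.J (T.J Y)⟫ = 0 := KM_r_self₁ T _ _ _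
  -- reduction of atoms in P2 : (A₁,A₂,A₃) = (Z, Y, Z)
  have hG : ⟪T.R Z (T.J Y) X, T.J Z⟫ = ⟪T.R X (T.J Z) Y, T.J Z⟫ := by
    rw [T.pair_symm, T.antisymm₂, KM_r5' T X (T.J Z) Y Z, neg_neg]
  have hH : ⟪T.R Z (T.J Z) X, T.J Y⟫ = ⟪T.R X (T.J Y) Z, T.J Z⟫ := by
    rw [T.pair_symm]
  have hI : ⟪T.R Y (T.J Z) X, T.J Z⟫ = ⟪T.R X (T.J Z) Y, T.J Z⟫ := by
    rw [T.pair_symm]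
  -- reduction of atoms in P3 : (A₁,A₂,A₃) = (Y, JZ, Z)
  have hK : ⟪T.R Y (T.J (T.J Z)) X, T.J Z⟫ = -⟪T.R X (T.J Z) Y, Z⟫ := by
    rw [T.J_sq, KM_R_neg₂, inner_neg_left, T.pair_symm]
  have hL : ⟪T.R Y (T.J Z) X, T.J (T.J Z)⟫ = -⟪T.R X Z Y, T.J Z⟫ := by
    rw [T.J_sq, inner_neg_right, T.pair_symm]
  have hM : ⟪T.R (T.J Z) (T.J Y) X, T.J Z⟫ = -⟪T.R X (T.J Z) Y, Z⟫ := by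
    rw [T.pair_symm, T.antisymm₂, KM_r5 T]
  have hN : ⟪T.R (T.J Z) (T.J Z) X, T.J Y⟫ = 0 := KM_r_self₁ T _ _ _
  have hO : ⟪T.R Z (T.J Y) X, T.J (T.J Z)⟫ = -⟪T.R X Z Y, T.J Z⟫ := by
    rw [T.J_sq, inner_neg_right, T.pair_symm, T.antisymm₂, KM_r5' T X Z Y Z]
    ring
  have hP : ⟪T.R Z (T.J (T.J Z)) X, T.J Y⟫ = 0 := by
    rw [T.J_sq, KM_R_neg₂, inner_neg_left, KM_r_self₁ T, neg_zero]
  -- reduction of atoms in P4 : (A₁,A₂,A₃) = (JY, Z, Z)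
  have hQ : ⟪T.R (T.J Y) (T.J Z) X, T.J Z⟫ = ⟪T.R X (T.J Z) Y, Z⟫ := by
    rw [T.pair_symm, KM_r5 T]
  have hS : ⟪T.R Z (T.J (T.J Y)) X, T.J Z⟫ = ⟪T.R X (T.J Z) Y, Z⟫ := by
    rw [T.J_sq, KM_R_neg₂, inner_neg_left, T.pair_symm, T.antisymm₂, neg_neg]
  have hT : ⟪T.R Z (T.J Z) X, T.J (T.J Y)⟫ = -⟪T.R X Y Z, T.J Z⟫ := by
    rw [T.J_sq, inner_neg_right, T.pair_symm]
  -- reduction of atoms in B1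
  have hU : ⟪T.R (T.J Y) Z X, T.J Z⟫ = -⟪T.R X (T.J Z) Y, T.J Z⟫ := by
    rw [T.pair_symm, KM_r5' T X (T.J Z) Y Z]
  have hW : ⟪T.R Z X (T.J Y), T.J Z⟫ = -⟪T.R X Z Y, Z⟫ := by
    rw [KM_r5 T, T.antisymm₁]
  -- reduction of atoms in B2
  have hX2 : ⟪T.R Y Z X, T.J Z⟫ = ⟪T.R X (T.J Z) Y, Z⟫ := by
    rw [T.pair_symm]
  have hY2 : ⟪T.R Z X Y, T.J Z⟫ = -⟪T.R X Z Y, T.J Z⟫ := by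
    rw [T.antisymm₁]
  -- goals in canonical form
  have g1 : ⟪T.R Z X Z, Y⟫ = ⟪T.R X Z Y, Z⟫ := by
    rw [T.antisymm₁, T.antisymm₂, neg_neg]
  have g2 : ⟪T.R (T.J Z) X (T.J Z), Y⟫ = ⟪T.R X (T.J Z) Y, T.J Z⟫ := by
    rw [T.antisymm₁, T.antisymm₂, neg_neg]
  have g3 : ⟪T.R Z (T.J X) Z, Y⟫ = -⟪T.R X (T.J Z) Y, Z⟫ := by
    rw [T.antisymm₁, T.antisymm₂, neg_neg, KM_rJ₁]
  refine ⟨?_, ?_, ?_⟩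
  · rw [g1]; linarith
  · rw [g2]; linarith
  · rw [g3]; linarith
end

section
/- Let (V, J, R) be an algebraic Kähler model of real dimension 2m with m ≥ 2, and suppose ⟨R(X,JX)Y,JX⟩ = 0 for all vectors X, Y ∈ V such that X, JX, Y, JY are orthonormal (pointwise constant holomorphic sectional curvature). Then every J-invariant subspace W of V is very special for R: for all v, w ∈ W one has R(v, w) v ∈ W. -/
open RealInnerProductSpace Module

lemma KahlerModel.inner_J_self_s17 {V : Type*} [NormedAddCommGroup V] [InnerProductSpace ℝ V]
    (T : KahlerModel V) (Z : V) : ⟪Z, T.J Z⟫ = 0 := by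
  have h := T.J_isometry Z (T.J Z)
  rw [T.J_sq, inner_neg_right] at h
  have h2 : ⟪T.J Z, Z⟫ = ⟪Z, T.J Z⟫ := real_inner_comm _ _
  linarith

lemma KahlerModel.ortho4 {V : Type*} [NormedAddCommGroup V] [InnerProductSpace ℝ V]
    (T : KahlerModel V) {X Y : V} (hX : ‖X‖ = 1) (hY : ‖Y‖ = 1)
    (hXY : ⟪X, Y⟫ = 0) (hJXY : ⟪T.J X, Y⟫ = 0) :
    Orthonormal ℝ ![X, T.J X, Y, T.J Y] := by
  have hXJY : ⟪X, T.J Y⟫ = 0 := by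
    have h := T.J_isometry (T.J X) Y
    rw [T.J_sq, inner_neg_left] at h
    linarith
  have h00 : ⟪X, X⟫ = 1 := by
    rw [real_inner_self_eq_norm_sq, hX]; norm_num
  have hYY : ⟪Y, Y⟫ = 1 := by
    rw [real_inner_self_eq_norm_sq, hY]; norm_num
  have hYX : ⟪Y, X⟫ = 0 := by rw [real_inner_comm]; exact hXY
  have hYJX : ⟪Y, T.J X⟫ = 0 := by rw [real_inner_comm]; exact hJXY
  have hJYX : ⟪T.J Y, X⟫ = 0 := by rw [real_inner_comm]; exact hXJY
  have hJselfX : ⟪X, T.J X⟫ = 0 := T.inner_J_self_s17 X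
  have hJselfY : ⟪Y, T.J Y⟫ = 0 := T.inner_J_self_s17 Y
  have hJXX : ⟪T.J X, X⟫ = 0 := by rw [real_inner_comm]; exact hJselfX
  have hJYY : ⟪T.J Y, Y⟫ = 0 := by rw [real_inner_comm]; exact hJselfY
  have hJXn : ‖T.J X‖ = 1 := by
    have h := T.J_isometry X X
    rw [h00, real_inner_self_eq_norm_sq] at h
    nlinarith [norm_nonneg (T.J X)]
  have hJYn : ‖T.J Y‖ = 1 := by
    have h := T.J_isometry Y Y
    rw [hYY, real_inner_self_eq_norm_sq] at h
    nlinarith [norm_nonneg (T.J Y)]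
  rw [orthonormal_iff_ite]
  intro i j
  fin_cases i <;> fin_cases j <;>
    simp [T.J_isometry, hX, hY, hJXn, hJYn, h00, hYY, hXY, hYX, hXJY, hJYX, hJXY, hYJX,
      hJselfX, hJselfY, hJXX, hJYY]

theorem holomorphic_subspace_verySpecial_of_constant_holomorphic {V : Type*} [NormedAddCommGroup V] [InnerProductSpace ℝ V] [FiniteDimensional ℝ V]
    (T : KahlerModel V) (m : ℕ) (hm : 2 ≤ m) (hdim : finrank ℝ V = 2 * m)
    (hconst : ∀ X Y : V, Orthonormal ℝ ![X, T.J X, Y, T.J Y] →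
      ⟪T.R X (T.J X) Y, T.J X⟫ = 0)
    (W : Submodule ℝ V) (hJW : W.map T.J = W)
    (v w : V) (hv : v ∈ W) (hw : w ∈ W) :
    T.R v w v ∈ W := by
  classical
  -- linearity helpers
  have hadd1 : ∀ a b c d : V, T.R (a + b) c d = T.R a c d + T.R b c d :=
    fun a b c d => (T.lin₁ c d).map_add a b
  have hadd2 : ∀ a b c d : V, T.R a (b + c) d = T.R a b d + T.R a c d :=
    fun a b c d => (T.lin₂ a d).map_add b c
  have hadd3 : ∀ a b c d : V, T.R a b (c + d) = T.R a b c + T.R a b d :=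
    fun a b c d => (T.lin₃ a b).map_add c d
  have hsub1 : ∀ a b c d : V, T.R (a - b) c d = T.R a c d - T.R b c d :=
    fun a b c d => (T.lin₁ c d).map_sub a b
  have hsub2 : ∀ a b c d : V, T.R a (b - c) d = T.R a b d - T.R a c d :=
    fun a b c d => (T.lin₂ a d).map_sub b c
  have hsub3 : ∀ a b c d : V, T.R a b (c - d) = T.R a b c - T.R a b d :=
    fun a b c d => (T.lin₃ a b).map_sub c d
  have hneg2 : ∀ a b c : V, T.R a (-b) c = -T.R a b c :=
    fun a b c => (T.lin₂ a c).map_neg b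
  have hneg3 : ∀ a b c : V, T.R a b (-c) = -T.R a b c :=
    fun a b c => (T.lin₃ a b).map_neg c
  have hsm1 : ∀ (r : ℝ) (a b c : V), T.R (r • a) b c = r • T.R a b c :=
    fun r a b c => (T.lin₁ b c).map_smul r a
  have hsm2 : ∀ (r : ℝ) (a b c : V), T.R a (r • b) c = r • T.R a b c :=
    fun r a b c => (T.lin₂ a c).map_smul r b
  have hsm3 : ∀ (r : ℝ) (a b c : V), T.R a b (r • c) = r • T.R a b c :=
    fun r a b c => (T.lin₃ a b).map_smul r c
  have hJmem : ∀ x ∈ W, T.J x ∈ W := by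
    intro x hx
    rw [← hJW]
    exact Submodule.mem_map_of_mem hx
  rw [← Submodule.orthogonal_orthogonal W, Submodule.mem_orthogonal]
  intro u hu
  have horth : ∀ x ∈ W, ⟪x, u⟫ = 0 := (Submodule.mem_orthogonal W u).mp hu
  -- homogeneity of the holomorphic curvature expression
  have hs : ∀ (a b : ℝ) (X Y : V),
      ⟪T.R (a • X) (T.J (a • X)) (b • Y), T.J (a • X)⟫
        = a ^ 3 * (b * ⟪T.R X (T.J X) Y, T.J X⟫) := by
    intro a b X Y
    simp only [map_smul, hsm1, hsm2, hsm3, real_inner_smul_left, real_inner_smul_right]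
    ring
  -- Step A: for x ∈ W, R(x,Jx)Jx ⊥ u
  have stepA : ∀ x ∈ W, ⟪T.R x (T.J x) (T.J x), u⟫ = 0 := by
    intro x hx
    rcases eq_or_ne x 0 with rfl | hx0
    · have h0 : T.R (0 : V) (T.J 0) (T.J 0) = 0 := (T.lin₁ _ _).map_zero
      rw [h0, inner_zero_left]
    rcases eq_or_ne u 0 with hu0 | hu0
    · rw [hu0, inner_zero_right]
    set X : V := ‖x‖⁻¹ • x with hXdef
    set Y : V := ‖u‖⁻¹ • u with hYdef
    have hcx : ‖x‖ ≠ 0 := norm_ne_zero_iff.mpr hx0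
    have hcu : ‖u‖ ≠ 0 := norm_ne_zero_iff.mpr hu0
    have hXn : ‖X‖ = 1 := norm_smul_inv_norm hx0
    have hYn : ‖Y‖ = 1 := norm_smul_inv_norm hu0
    have hXY : ⟪X, Y⟫ = 0 := by
      rw [hXdef, hYdef, real_inner_smul_left, real_inner_smul_right, horth x hx]
      ring
    have hJXY : ⟪T.J X, Y⟫ = 0 := by
      rw [hXdef, hYdef, map_smul, real_inner_smul_left, real_inner_smul_right,
        horth (T.J x) (hJmem x hx)]
      ring
    have hc := hconst X Y (T.ortho4 hXn hYn hXY hJXY)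
    have hx' : x = ‖x‖ • X := by
      rw [hXdef, smul_smul, mul_inv_cancel₀ hcx, one_smul]
    have hu' : u = ‖u‖ • Y := by
      rw [hYdef, smul_smul, mul_inv_cancel₀ hcu, one_smul]
    rw [T.antisymm₂ x (T.J x) (T.J x) u, neg_eq_zero]
    calc ⟪T.R x (T.J x) u, T.J x⟫
        = ⟪T.R (‖x‖ • X) (T.J (‖x‖ • X)) (‖u‖ • Y), T.J (‖x‖ • X)⟫ := by
          rw [← hx', ← hu']
      _ = ‖x‖ ^ 3 * (‖u‖ * ⟪T.R X (T.J X) Y, T.J X⟫) := hs _ _ _ _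
      _ = 0 := by rw [hc]; ring
  -- Step B: polarization
  have stepB : ∀ x ∈ W, ∀ y ∈ W,
      ⟪T.R x (T.J x) (T.J y), u⟫ + ⟪T.R x (T.J y) (T.J x), u⟫
        + ⟪T.R y (T.J x) (T.J x), u⟫ = 0 := by
    intro x hx y hy
    have h1 := stepA (x + y) (W.add_mem hx hy)
    have h2 := stepA (x - y) (W.sub_mem hx hy)
    have h3 := stepA x hx
    have h4 := stepA y hy
    simp only [map_add, map_sub, hadd1, hadd2, hadd3, hsub1, hsub2, hsub3,
      inner_add_left, inner_sub_left] at h1 h2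
    linarith
  -- Step C: symmetry juggling
  have fact1 := stepB v hv w hw
  have fact2 : ⟪T.R v (T.J v) (T.J w), u⟫ - 2 * ⟪T.R v w v, u⟫ = 0 := by
    have h := stepB (T.J v) (hJmem v hv) w hw
    rw [T.J_sq] at h
    simp only [hneg2, hneg3, inner_neg_left, neg_neg] at h
    rw [T.antisymm₁ (T.J v) v (T.J w) u, T.R_J_invariant v w v,
      T.antisymm₁ w v v u] at h
    linarith
  have fact3 : ⟪T.R v (T.J v) (T.J w), u⟫ + ⟪T.R v w v, u⟫
      - ⟪T.R v (T.J w) (T.J v), u⟫ = 0 := by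
    have h := congrArg (fun z => (⟪z, u⟫ : ℝ)) (T.bianchi v (T.J v) (T.J w))
    simp only [inner_add_left, inner_zero_left] at h
    rw [T.R_J_invariant v w v, T.antisymm₁ (T.J w) v (T.J v) u] at h
    linarith
  have fact4 : ⟪T.R w (T.J v) (T.J v), u⟫ = ⟪T.R v (T.J w) (T.J v), u⟫ := by
    rw [← T.R_J_invariant w (T.J v) (T.J v), T.J_sq, hneg2, inner_neg_left,
      T.antisymm₁ (T.J w) v (T.J v) u, neg_neg]
  rw [real_inner_comm]
  linarith
end
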